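/- arXiv:2502.17746 — 7 statements merged into one kernel-verified Lean document; each statement's English description precedes it below -/
import Mathlib

section
/- Let $(\Omega,\mathcal{F},\mathbb{P})$ be a probability space and $(X_n)_{n\in\mathbb{N}}$ a sequence of uniformly bounded, non-negative random variables. Suppose there exist $a\in(0,1)$ and $c>0$ such that $\mathbb{E}(X_n)=cn^{-a}$ for all $n$, and there exists $\varepsilon>0$ and $C>0$ such that $\sum_{n=1}^N\sum_{m=n+1}^N \operatorname{Cov}(X_n,X_m)\le C N^{2-2a-\varepsilon}$ for all $N$. Then for almost every $\omega\in\Omega$, $\lim_{N\to\infty}\frac{1}{W_N}\sum_{n=1}^N X_n(\omega)=1$, where $W_N:=\sum_{n=1}^N\mathbb{E}(X_n)$. -/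
open MeasureTheory Filter Topology

lemma aux_ae_tendsto {Ω : Type*} [MeasurableSpace Ω] (P : Measure Ω)
    (Z : ℕ → Ω → ℝ) (hm : ∀ k, AEMeasurable (Z k) P)
    (b : ℕ → ℝ) (hb : Summable b)
    (hZb : ∀ k, ∫ ω, (Z k ω)^2 ∂P ≤ b k)
    (hint : ∀ k, Integrable (fun ω => (Z k ω)^2) P) :
    ∀ᵐ ω ∂P, Tendsto (fun k => Z k ω) atTop (𝓝 0) := by
  have hbnn : ∀ k, 0 ≤ b k := fun k =>
    le_trans (integral_nonneg (fun ω => sq_nonneg _)) (hZb k)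
  have hle : ∀ k, ∫⁻ ω, ENNReal.ofReal ((Z k ω)^2) ∂P ≤ ENNReal.ofReal (b k) := by
    intro k
    rw [← ofReal_integral_eq_lintegral_ofReal (hint k) (ae_of_all _ fun ω => sq_nonneg _)]
    exact ENNReal.ofReal_le_ofReal (hZb k)
  have htsum : ∫⁻ ω, ∑' k, ENNReal.ofReal ((Z k ω)^2) ∂P < ⊤ := by
    rw [lintegral_tsum (fun k => (hm k).pow_const 2 |>.ennreal_ofReal)]
    calc ∑' k, ∫⁻ ω, ENNReal.ofReal ((Z k ω)^2) ∂P ≤ ∑' k, ENNReal.ofReal (b k) :=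
          ENNReal.tsum_le_tsum hle
      _ = ENNReal.ofReal (∑' k, b k) := (ENNReal.ofReal_tsum_of_nonneg hbnn hb).symm
      _ < ⊤ := ENNReal.ofReal_lt_top
  have hae : ∀ᵐ ω ∂P, ∑' k, ENNReal.ofReal ((Z k ω)^2) < ⊤ := by
    apply ae_lt_top' _ htsum.ne
    exact AEMeasurable.ennreal_tsum (fun k => (hm k).pow_const 2 |>.ennreal_ofReal)
  filter_upwards [hae] with ω hω
  have h1 : Tendsto (fun k => ENNReal.ofReal ((Z k ω)^2)) atTop (𝓝 0) :=
    ENNReal.tendsto_atTop_zero_of_tsum_ne_top hω.ne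
  have h2 : Tendsto (fun k => (Z k ω)^2) atTop (𝓝 0) := by
    have := (ENNReal.tendsto_toReal (by simp)).comp h1
    have heq : (ENNReal.toReal ∘ fun k => ENNReal.ofReal (Z k ω ^ 2)) = fun k => Z k ω ^ 2 := by
      funext k; simp [ENNReal.toReal_ofReal (sq_nonneg _)]
    rwa [heq] at this
  have h3 : Tendsto (fun k => |Z k ω|) atTop (𝓝 0) := by
    have := (Real.continuous_sqrt.tendsto 0).comp h2
    have heq : ((fun x => Real.sqrt x) ∘ fun k => Z k ω ^ 2) = fun k => |Z k ω| := by
      funext k; simp [Real.sqrt_sq_eq_abs]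
    rw [heq] at this; simpa using this
  exact tendsto_zero_iff_abs_tendsto_zero _ |>.mpr h3

lemma aux_squeeze (S W : ℕ → ℝ) (φ : ℕ → ℕ) (hφ : StrictMono φ)
    (hφ1 : ∀ k, 1 ≤ φ k)
    (hS0 : ∀ n, 0 ≤ S n) (hSmono : Monotone S) (hWmono : Monotone W)
    (hWpos : ∀ n, 1 ≤ n → 0 < W n)
    (h1 : Tendsto (fun k => S (φ k) / W (φ k)) atTop (𝓝 1))
    (h2 : Tendsto (fun k => W (φ (k+1)) / W (φ k)) atTop (𝓝 1)) :
    Tendsto (fun N => S N / W N) atTop (𝓝 1) := by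
  have hWφ : ∀ k, 0 < W (φ k) := fun k => hWpos _ (hφ1 k)
  -- upper sequence u k = r (k+1) * ρ k, lower l k = r k / ρ k
  have hu : Tendsto (fun k => (S (φ (k+1)) / W (φ (k+1))) * (W (φ (k+1)) / W (φ k)))
      atTop (𝓝 1) := by
    have := (h1.comp (tendsto_add_atTop_nat 1)).mul h2
    simpa using this
  have hl : Tendsto (fun k => (S (φ k) / W (φ k)) / (W (φ (k+1)) / W (φ k)))
      atTop (𝓝 1) := by
    have := h1.div h2 one_ne_zero
    rw [div_one] at this
    exact this
  rw [Metric.tendsto_atTop]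
  intro εp hεp
  rw [Metric.tendsto_atTop] at hu hl
  obtain ⟨K1, hK1⟩ := hu εp hεp
  obtain ⟨K2, hK2⟩ := hl εp hεp
  set K := max K1 K2
  refine ⟨φ K, fun N hN => ?_⟩
  set k := Nat.findGreatest (fun j => φ j ≤ N) N with hk
  have hKN : K ≤ N := le_trans (hφ.le_apply) hN
  have hkK : K ≤ k := Nat.le_findGreatest hKN hN
  have hφk : φ k ≤ N := Nat.findGreatest_spec (P := fun j => φ j ≤ N) hKN hN
  have hNlt : N < φ (k+1) := by
    by_contra h
    push_neg at h
    have hk1N : k + 1 ≤ N := le_trans (hφ.le_apply) h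
    have := Nat.le_findGreatest (P := fun j => φ j ≤ N) hk1N h
    omega
  have hWN : 0 < W N := hWpos _ (le_trans (hφ1 k) hφk)
  -- upper bound
  have hub : S N / W N ≤ (S (φ (k+1)) / W (φ (k+1))) * (W (φ (k+1)) / W (φ k)) := by
    have : (S (φ (k+1)) / W (φ (k+1))) * (W (φ (k+1)) / W (φ k))
        = S (φ (k+1)) / W (φ k) := by
      rw [div_mul_div_comm, mul_comm (S (φ (k+1))) (W (φ (k+1))),
        mul_div_mul_left _ _ (ne_of_gt (hWφ (k+1)))]
    rw [this]
    exact div_le_div₀ (hS0 _) (hSmono hNlt.le) (hWφ k) (hWmono hφk)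
  have hlb : (S (φ k) / W (φ k)) / (W (φ (k+1)) / W (φ k)) ≤ S N / W N := by
    have : (S (φ k) / W (φ k)) / (W (φ (k+1)) / W (φ k)) = S (φ k) / W (φ (k+1)) := by
      rw [div_div_div_eq, mul_comm (S (φ k)) (W (φ k)), mul_div_mul_left _ _ (ne_of_gt (hWφ k))]
    rw [this]
    exact div_le_div₀ (hS0 _) (hSmono hφk) hWN (hWmono hNlt.le)
  have hK1' := hK1 k (le_trans (le_max_left _ _) hkK)
  have hK2' := hK2 k (le_trans (le_max_right _ _) hkK)
  rw [Real.dist_eq] at hK1' hK2' ⊢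
  rw [abs_lt] at hK1' hK2' ⊢
  constructor
  · linarith [hlb]
  · linarith [hub]

lemma aux_double_sum (g : ℕ → ℕ → ℝ) (hsymm : ∀ n m, g n m = g m n) (N : ℕ) :
    ∑ n ∈ Finset.Icc 1 N, ∑ m ∈ Finset.Icc 1 N, g n m
      = ∑ n ∈ Finset.Icc 1 N, g n n
        + 2 * ∑ n ∈ Finset.Icc 1 N, ∑ m ∈ Finset.Icc (n+1) N, g n m := by
  induction N with
  | zero => simp
  | succ N ih =>
    have hins : Finset.Icc 1 (N+1) = insert (N+1) (Finset.Icc 1 N) := by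
      rw [← Finset.insert_Icc_right_eq_Icc_add_one (by omega)]
    have hnot : (N+1) ∉ Finset.Icc 1 N := by simp
    have hIcc2 : ∀ n ∈ Finset.Icc 1 N, Finset.Icc (n+1) (N+1)
        = insert (N+1) (Finset.Icc (n+1) N) := by
      intro n hn
      simp only [Finset.mem_Icc] at hn
      rw [← Finset.insert_Icc_right_eq_Icc_add_one (by omega)]
    have hinner : ∀ n ∈ Finset.Icc 1 N, ∑ m ∈ Finset.Icc 1 (N+1), g n m
        = g n (N+1) + ∑ m ∈ Finset.Icc 1 N, g n m := by
      intro n _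
      rw [hins, Finset.sum_insert hnot]
    calc ∑ n ∈ Finset.Icc 1 (N+1), ∑ m ∈ Finset.Icc 1 (N+1), g n m
        = (g (N+1) (N+1) + ∑ m ∈ Finset.Icc 1 N, g (N+1) m)
          + ∑ n ∈ Finset.Icc 1 N, (g n (N+1) + ∑ m ∈ Finset.Icc 1 N, g n m) := by
          rw [hins, Finset.sum_insert hnot, Finset.sum_insert hnot]
          congr 1
          exact Finset.sum_congr rfl fun n _ => Finset.sum_insert hnot
      _ = g (N+1) (N+1) + 2 * ∑ n ∈ Finset.Icc 1 N, g n (N+1)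
          + ∑ n ∈ Finset.Icc 1 N, ∑ m ∈ Finset.Icc 1 N, g n m := by
          rw [Finset.sum_add_distrib]
          have : ∑ m ∈ Finset.Icc 1 N, g (N+1) m = ∑ n ∈ Finset.Icc 1 N, g n (N+1) :=
            Finset.sum_congr rfl (fun m _ => hsymm _ _)
          rw [this]; ring
      _ = ∑ n ∈ Finset.Icc 1 (N+1), g n n
          + 2 * ∑ n ∈ Finset.Icc 1 (N+1), ∑ m ∈ Finset.Icc (n+1) (N+1), g n m := by
          have hempty : Finset.Icc (N+1+1) (N+1) = ∅ := by
            apply Finset.Icc_eq_empty; omega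
          have hstep : ∑ n ∈ Finset.Icc 1 (N+1), ∑ m ∈ Finset.Icc (n+1) (N+1), g n m
              = ∑ n ∈ Finset.Icc 1 N, (g n (N+1) + ∑ m ∈ Finset.Icc (n+1) N, g n m) := by
            rw [hins, Finset.sum_insert hnot, hempty, Finset.sum_empty, zero_add]
            refine Finset.sum_congr rfl (fun n hn => ?_)
            rw [hIcc2 n hn, Finset.sum_insert (by
              simp only [Finset.mem_Icc] at hn ⊢; omega)]
          rw [ih, hstep, hins, Finset.sum_insert hnot, Finset.sum_add_distrib]
          ring

lemma aux_integrable_of_bound {Ω : Type*} [MeasurableSpace Ω] (P : Measure Ω)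
    [IsFiniteMeasure P] (f : Ω → ℝ) (hf : AEStronglyMeasurable f P) (B : ℝ)
    (h : ∀ᵐ ω ∂P, |f ω| ≤ B) : Integrable f P :=
  (memLp_top_of_bound hf B (by simpa [Real.norm_eq_abs] using h)).integrable le_top

theorem stmt0 {Ω : Type*} [MeasurableSpace Ω] (P : Measure Ω) [IsProbabilityMeasure P]
    (X : ℕ → Ω → ℝ) (hmeas : ∀ n, Measurable (X n))
    (M : ℝ) (hbd : ∀ n, ∀ᵐ ω ∂P, |X n ω| ≤ M)
    (hpos : ∀ n, ∀ᵐ ω ∂P, 0 ≤ X n ω)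
    (a : ℝ) (ha : a ∈ Set.Ioo (0:ℝ) 1) (c : ℝ) (hc : 0 < c)
    (hmean : ∀ n : ℕ, 1 ≤ n → ∫ ω, X n ω ∂P = c * (n : ℝ) ^ (-a))
    (C ε : ℝ) (hC : 0 < C) (hε : 0 < ε)
    (hcov : ∀ N : ℕ, ∑ n ∈ Finset.Icc 1 N, ∑ m ∈ Finset.Icc (n+1) N,
        ((∫ ω, X n ω * X m ω ∂P) - (∫ ω, X n ω ∂P) * (∫ ω, X m ω ∂P))
      ≤ C * (N : ℝ) ^ (2 - 2*a - ε)) :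
    ∀ᵐ ω ∂P, Tendsto (fun N : ℕ =>
        (∑ n ∈ Finset.Icc 1 N, X n ω) / (∑ n ∈ Finset.Icc 1 N, ∫ ω', X n ω' ∂P))
      atTop (𝓝 1) := by
  obtain ⟨ha0, ha1⟩ := ha
  set μval : ℕ → ℝ := fun n => ∫ ω, X n ω ∂P with hμdef
  set W : ℕ → ℝ := fun N => ∑ n ∈ Finset.Icc 1 N, μval n with hWdef
  have hM0 : 0 ≤ M := by
    obtain ⟨ω, hω⟩ := (hbd 0).exists
    exact le_trans (abs_nonneg _) hω
  have hint : ∀ n, Integrable (X n) P := fun n =>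
    aux_integrable_of_bound P _ (hmeas n).aestronglyMeasurable M (hbd n)
  have hint2 : ∀ n m, Integrable (fun ω => X n ω * X m ω) P := by
    intro n m
    apply aux_integrable_of_bound P _ (((hmeas n).mul (hmeas m)).aestronglyMeasurable) (M*M)
    filter_upwards [hbd n, hbd m] with ω h1 h2
    rw [Pi.mul_apply, abs_mul]
    exact mul_le_mul h1 h2 (abs_nonneg _) hM0
  have hμ0 : ∀ n, 0 ≤ μval n := fun n => integral_nonneg_of_ae (hpos n)
  have hintsq : ∀ n, Integrable (fun ω => (X n ω)^2) P := by
    intro n; simpa [sq] using hint2 n n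
  have hμM : ∀ n, ∫ ω, (X n ω)^2 ∂P ≤ M * μval n := by
    intro n
    have h1 : ∫ ω, (X n ω)^2 ∂P ≤ ∫ ω, M * X n ω ∂P := by
      apply integral_mono_ae (hintsq n) ((hint n).const_mul M)
      filter_upwards [hbd n, hpos n] with ω h1 h2
      have : X n ω ≤ M := le_trans (le_abs_self _) h1
      calc (X n ω)^2 = X n ω * X n ω := sq (X n ω)
      _ ≤ M * X n ω := mul_le_mul_of_nonneg_right this h2
    rwa [integral_const_mul] at h1
  -- mean values are ≤ M
  have hμMle : ∀ n, μval n ≤ M := by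
    intro n
    calc μval n = ∫ ω, X n ω ∂P := rfl
    _ ≤ ∫ _ω, M ∂P := by
        apply integral_mono_ae (hint n) (integrable_const M)
        filter_upwards [hbd n] with ω h
        exact le_trans (le_abs_self _) h
    _ = M := by simp
  have hWmono : Monotone W := by
    intro N N' h
    apply Finset.sum_le_sum_of_subset_of_nonneg (Finset.Icc_subset_Icc_right h)
    intro n _ _; exact hμ0 n
  have hterm_anti : ∀ p q : ℕ, 1 ≤ p → p ≤ q → c * (q:ℝ)^(-a) ≤ c * (p:ℝ)^(-a) := by
    intro p q hp hpq
    apply mul_le_mul_of_nonneg_left _ hc.le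
    have hp0 : (0:ℝ) < p := by exact_mod_cast hp
    have hq0 : (0:ℝ) < q := lt_of_lt_of_le hp0 (by exact_mod_cast hpq)
    rw [Real.rpow_neg hp0.le, Real.rpow_neg hq0.le]
    apply inv_anti₀ (Real.rpow_pos_of_pos hp0 a)
    exact Real.rpow_le_rpow hp0.le (by exact_mod_cast hpq) ha0.le
  have hWlb : ∀ N : ℕ, 1 ≤ N → c * (N:ℝ)^(1-a) ≤ W N := by
    intro N hN
    have h1 : ∀ n ∈ Finset.Icc 1 N, c * (N:ℝ)^(-a) ≤ μval n := by
      intro n hn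
      simp only [Finset.mem_Icc] at hn
      rw [show μval n = c * (n:ℝ)^(-a) from hmean n hn.1]
      exact hterm_anti n N hn.1 hn.2
    have h2 := Finset.card_nsmul_le_sum _ _ _ h1
    rw [Nat.card_Icc, nsmul_eq_mul] at h2
    have hN0 : (0:ℝ) < N := by exact_mod_cast hN
    have hpow : (N:ℝ)^(1-a) = (N:ℝ) * (N:ℝ)^(-a) := by
      rw [sub_eq_add_neg, Real.rpow_add hN0, Real.rpow_one]
    have hcast : ((N + 1 - 1 : ℕ) : ℝ) = (N:ℝ) := by push_cast; ring
    rw [hcast] at h2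
    calc c * (N:ℝ)^(1-a) = (N:ℝ) * (c * (N:ℝ)^(-a)) := by rw [hpow]; ring
    _ ≤ W N := h2
  have hWpos : ∀ N : ℕ, 1 ≤ N → 0 < W N := by
    intro N hN
    have hN0 : (0:ℝ) < N := by exact_mod_cast hN
    exact lt_of_lt_of_le (by positivity) (hWlb N hN)
  -- covariance terms
  set g : ℕ → ℕ → ℝ := fun n m => (∫ ω, X n ω * X m ω ∂P) - μval n * μval m with hgdef
  have hgsymm : ∀ n m, g n m = g m n := by
    intro n m
    simp only [hgdef]
    rw [mul_comm (μval n)]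
    congr 1
    exact integral_congr_ae (ae_of_all _ fun ω => mul_comm _ _)
  have hYint : ∀ n m, Integrable (fun ω => (X n ω - μval n) * (X m ω - μval m)) P := by
    intro n m
    have heq : (fun ω => (X n ω - μval n) * (X m ω - μval m))
        = fun ω => X n ω * X m ω - μval n * X m ω - μval m * X n ω + μval n * μval m := by
      funext ω; ring
    rw [heq]
    exact (((hint2 n m).sub ((hint m).const_mul _)).sub ((hint n).const_mul _)).add
      (integrable_const _)
  have hYval : ∀ n m, ∫ ω, (X n ω - μval n) * (X m ω - μval m) ∂P = g n m := by
    intro n m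
    have heq : (fun ω => (X n ω - μval n) * (X m ω - μval m))
        = fun ω => X n ω * X m ω - μval n * X m ω - μval m * X n ω + μval n * μval m := by
      funext ω; ring
    have i4 : Integrable (fun ω => μval n * X m ω) P := (hint m).const_mul _
    have i5 : Integrable (fun ω => μval m * X n ω) P := (hint n).const_mul _
    have i2 : Integrable (fun ω => X n ω * X m ω - μval n * X m ω) P := (hint2 n m).sub i4
    have i1 : Integrable (fun ω => X n ω * X m ω - μval n * X m ω - μval m * X n ω) P :=
      i2.sub i5
    rw [heq, integral_add i1 (integrable_const _), integral_sub i2 i5,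
      integral_sub (hint2 n m) i4, integral_const_mul, integral_const_mul, integral_const]
    simp only [measure_univ, probReal_univ, ENNReal.toReal_one, smul_eq_mul, one_mul, hgdef]
    ring
  have hSW : ∀ N : ℕ, ∫ ω, ((∑ n ∈ Finset.Icc 1 N, X n ω) - W N)^2 ∂P
      = ∑ n ∈ Finset.Icc 1 N, ∑ m ∈ Finset.Icc 1 N, g n m := by
    intro N
    have h1 : ∀ ω, ((∑ n ∈ Finset.Icc 1 N, X n ω) - W N)^2
        = ∑ n ∈ Finset.Icc 1 N, ∑ m ∈ Finset.Icc 1 N,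
            (X n ω - μval n) * (X m ω - μval m) := by
      intro ω
      have : (∑ n ∈ Finset.Icc 1 N, X n ω) - W N
          = ∑ n ∈ Finset.Icc 1 N, (X n ω - μval n) := by
        rw [hWdef, ← Finset.sum_sub_distrib]
      rw [this, sq, Finset.sum_mul_sum]
    simp_rw [h1]
    rw [integral_finset_sum _ (fun n _ => integrable_finset_sum _ (fun m _ => hYint n m))]
    refine Finset.sum_congr rfl fun n _ => ?_
    rw [integral_finset_sum _ (fun m _ => hYint n m)]
    exact Finset.sum_congr rfl fun m _ => hYval n m
  have hintSW : ∀ N : ℕ, Integrable (fun ω => ((∑ n ∈ Finset.Icc 1 N, X n ω) - W N)^2) P := by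
    intro N
    have h1 : ∀ ω, ((∑ n ∈ Finset.Icc 1 N, X n ω) - W N)^2
        = ∑ n ∈ Finset.Icc 1 N, ∑ m ∈ Finset.Icc 1 N,
            (X n ω - μval n) * (X m ω - μval m) := by
      intro ω
      have : (∑ n ∈ Finset.Icc 1 N, X n ω) - W N
          = ∑ n ∈ Finset.Icc 1 N, (X n ω - μval n) := by
        rw [hWdef, ← Finset.sum_sub_distrib]
      rw [this, sq, Finset.sum_mul_sum]
    simp_rw [h1]
    exact integrable_finset_sum _ (fun n _ => integrable_finset_sum _ (fun m _ => hYint n m))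
  have hvar : ∀ N : ℕ, ∫ ω, ((∑ n ∈ Finset.Icc 1 N, X n ω) - W N)^2 ∂P
      ≤ M * W N + 2*C*(N:ℝ)^(2 - 2*a - ε) := by
    intro N
    rw [hSW N, aux_double_sum g hgsymm N]
    have hdiag : ∑ n ∈ Finset.Icc 1 N, g n n ≤ M * W N := by
      rw [hWdef]
      simp only
      rw [Finset.mul_sum]
      apply Finset.sum_le_sum
      intro n _
      have h1 : g n n ≤ ∫ ω, (X n ω)^2 ∂P := by
        have : (∫ ω, X n ω * X n ω ∂P) = ∫ ω, (X n ω)^2 ∂P := by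
          exact integral_congr_ae (ae_of_all _ fun ω => (sq (X n ω)).symm)
        simp only [hgdef]
        rw [this]
        nlinarith [mul_self_nonneg (μval n)]
      exact le_trans h1 (hμM n)
    have hcv : ∑ n ∈ Finset.Icc 1 N, ∑ m ∈ Finset.Icc (n+1) N, g n m
        ≤ C * (N:ℝ)^(2 - 2*a - ε) := hcov N
    linarith
  -- choose exponent parameters
  set δ : ℝ := min (1-a) ε with hδdef
  have hδ0 : 0 < δ := lt_min (by linarith) hε
  obtain ⟨m, hm⟩ := exists_nat_gt (1/δ)
  have hmδ : 1 < (m:ℝ) * δ := by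
    rw [div_lt_iff₀ hδ0] at hm; linarith
  have hm0 : m ≠ 0 := by rintro rfl; norm_num at hmδ
  set φ : ℕ → ℕ := fun k => (k+1)^m with hφdef
  have hφ1 : ∀ k, 1 ≤ φ k := fun k => Nat.one_le_pow _ _ (by omega)
  have hφmono : StrictMono φ := fun k l h => Nat.pow_lt_pow_left (by omega) hm0
  have hφcast : ∀ k, (φ k : ℝ) = ((k:ℝ)+1)^m := by
    intro k; rw [hφdef]; push_cast; ring
  -- normalized deviations
  set Z : ℕ → Ω → ℝ :=
    fun k ω => ((∑ n ∈ Finset.Icc 1 (φ k), X n ω) - W (φ k)) / W (φ k) with hZdef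
  set D : ℝ := M/c + 2*C/c^2 with hDdef
  have hrpowφ : ∀ k, ((φ k : ℝ))^(-δ) = ((k:ℝ)+1)^(-((m:ℝ)*δ)) := by
    intro k
    rw [hφcast k, ← Real.rpow_natCast ((k:ℝ)+1) m, ← Real.rpow_mul (by positivity)]
    congr 1; ring
  have hZsq : ∀ k, ∫ ω, (Z k ω)^2 ∂P ≤ D * ((k:ℝ)+1)^(-((m:ℝ)*δ)) := by
    intro k
    have hn1 : 1 ≤ φ k := hφ1 k
    have hn0 : (0:ℝ) < (φ k : ℝ) := by exact_mod_cast hn1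
    have hn1R : (1:ℝ) ≤ (φ k : ℝ) := by exact_mod_cast hn1
    have hWn := hWpos _ hn1
    have hWlbn := hWlb _ hn1
    have hclb : (0:ℝ) < c * ((φ k:ℝ))^(1-a) := by positivity
    have hZint : ∫ ω, (Z k ω)^2 ∂P
        = (∫ ω, ((∑ i ∈ Finset.Icc 1 (φ k), X i ω) - W (φ k))^2 ∂P) / (W (φ k))^2 := by
      simp_rw [hZdef, div_pow]
      exact integral_div _ _
    rw [hZint]
    have h1 : (∫ ω, ((∑ i ∈ Finset.Icc 1 (φ k), X i ω) - W (φ k))^2 ∂P) / (W (φ k))^2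
        ≤ (M * W (φ k) + 2*C*((φ k:ℝ))^(2-2*a-ε)) / (W (φ k))^2 := by
      apply div_le_div_of_nonneg_right (hvar (φ k)) (by positivity)
    refine le_trans h1 ?_
    rw [add_div]
    have hA : M * W (φ k) / (W (φ k))^2 ≤ (M/c) * ((φ k:ℝ))^(-δ) := by
      rw [sq, mul_div_mul_right _ _ (ne_of_gt hWn)]
      calc M / W (φ k) ≤ M / (c * ((φ k:ℝ))^(1-a)) := by gcongr
      _ = (M/c) * ((φ k:ℝ))^(-(1-a)) := by
          rw [Real.rpow_neg hn0.le, div_mul_eq_div_div, div_eq_mul_inv (M/c)]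
      _ ≤ (M/c) * ((φ k:ℝ))^(-δ) := by
          apply mul_le_mul_of_nonneg_left _ (by positivity)
          apply Real.rpow_le_rpow_of_exponent_le hn1R
          have : δ ≤ 1 - a := min_le_left _ _
          linarith
    have hB : 2*C*((φ k:ℝ))^(2-2*a-ε) / (W (φ k))^2 ≤ (2*C/c^2) * ((φ k:ℝ))^(-δ) := by
      have hnum0 : (0:ℝ) ≤ 2*C*((φ k:ℝ))^(2-2*a-ε) := by positivity
      calc 2*C*((φ k:ℝ))^(2-2*a-ε) / (W (φ k))^2
          ≤ 2*C*((φ k:ℝ))^(2-2*a-ε) / (c * ((φ k:ℝ))^(1-a))^2 := by gcongr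
      _ = (2*C/c^2) * ((φ k:ℝ))^(-ε) := by
          have hsplit : ((φ k:ℝ))^(2-2*a-ε) = ((φ k:ℝ))^(2-2*a) * ((φ k:ℝ))^(-ε) := by
            rw [← Real.rpow_add hn0]; ring_nf
          have hsq : (c * ((φ k:ℝ))^(1-a))^2 = c^2 * ((φ k:ℝ))^(2-2*a) := by
            rw [mul_pow, sq (((φ k:ℝ))^(1-a)), ← Real.rpow_add hn0]; ring_nf
          rw [hsplit, hsq]
          have hx : ((φ k:ℝ))^(2-2*a) ≠ 0 := ne_of_gt (Real.rpow_pos_of_pos hn0 _)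
          field_simp
      _ ≤ (2*C/c^2) * ((φ k:ℝ))^(-δ) := by
          apply mul_le_mul_of_nonneg_left _ (by positivity)
          apply Real.rpow_le_rpow_of_exponent_le hn1R
          have : δ ≤ ε := min_le_right _ _
          linarith
    rw [← hrpowφ k, hDdef]
    calc M * W (φ k) / W (φ k) ^ 2 + 2 * C * ((φ k:ℝ)) ^ (2 - 2 * a - ε) / W (φ k) ^ 2
        ≤ (M/c) * ((φ k:ℝ))^(-δ) + (2*C/c^2) * ((φ k:ℝ))^(-δ) := add_le_add hA hB
    _ = (M / c + 2 * C / c ^ 2) * ((φ k:ℝ))^(-δ) := by ring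
  have hbsum : Summable (fun k : ℕ => D * ((k:ℝ)+1)^(-((m:ℝ)*δ))) := by
    apply Summable.mul_left
    have h := Real.summable_nat_rpow.mpr (show -((m:ℝ)*δ) < -1 by linarith)
    have h2 := (summable_nat_add_iff 1).mpr h
    apply h2.congr
    intro k
    push_cast
    ring_nf
  have hZmeas : ∀ k, AEMeasurable (Z k) P := by
    intro k
    apply Measurable.aemeasurable
    exact ((Finset.measurable_sum _ (fun n _ => hmeas n)).sub measurable_const).div_const _
  have hZint2 : ∀ k, Integrable (fun ω => (Z k ω)^2) P := by
    intro k
    simp_rw [hZdef, div_pow]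
    exact (hintSW (φ k)).div_const _
  have hae1 : ∀ᵐ ω ∂P, Tendsto (fun k => Z k ω) atTop (𝓝 0) :=
    aux_ae_tendsto P Z hZmeas _ hbsum hZsq hZint2
  -- ratio of W along subsequence
  have hρub : ∀ k, W (φ (k+1)) / W (φ k) ≤ (((k:ℝ)+2)/((k:ℝ)+1))^m := by
    intro k
    have h1 : φ k ≤ φ (k+1) := (hφmono (Nat.lt_succ_self k)).le
    have hWk := hWpos _ (hφ1 k)
    have hφk0 : (0:ℝ) < (φ k : ℝ) := by exact_mod_cast hφ1 k
    rw [div_le_iff₀ hWk]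
    have e1 : ∀ x:ℕ, Finset.Icc 1 x = Finset.Ioc 0 x := fun x => by
      rw [← Finset.Icc_add_one_left_eq_Ioc]
      rfl
    have hsplit : W (φ (k+1)) = W (φ k) + ∑ n ∈ Finset.Ioc (φ k) (φ (k+1)), μval n := by
      rw [hWdef]
      simp only
      rw [e1, e1, ← Finset.sum_Ioc_consecutive _ (Nat.zero_le _) h1]
    have hterm : ∑ n ∈ Finset.Ioc (φ k) (φ (k+1)), μval n
        ≤ ((φ (k+1) - φ k : ℕ):ℝ) * (c * ((φ k:ℝ))^(-a)) := by
      have hb : ∀ n ∈ Finset.Ioc (φ k) (φ (k+1)), μval n ≤ c * ((φ k:ℝ))^(-a) := by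
        intro n hn
        simp only [Finset.mem_Ioc] at hn
        rw [show μval n = c * (n:ℝ)^(-a) from hmean n (le_trans (hφ1 k) hn.1.le)]
        exact hterm_anti (φ k) n (hφ1 k) hn.1.le
      have := Finset.sum_le_card_nsmul _ _ _ hb
      rwa [Nat.card_Ioc, nsmul_eq_mul] at this
    have hcast : ((φ (k+1) - φ k : ℕ):ℝ) = (φ (k+1):ℝ) - (φ k:ℝ) := by
      exact Nat.cast_sub h1
    have hRcast : ((((k:ℝ)+2))/((k:ℝ)+1))^m = (φ (k+1):ℝ)/(φ k:ℝ) := by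
      rw [hφcast k, hφcast (k+1), div_pow]
      push_cast
      ring_nf
    have hkey : ((φ (k+1):ℝ) - (φ k:ℝ)) * (c * ((φ k:ℝ))^(-a))
        ≤ ((φ (k+1):ℝ)/(φ k:ℝ) - 1) * W (φ k) := by
      have h2 : (φ (k+1):ℝ)/(φ k:ℝ) - 1 = ((φ (k+1):ℝ) - (φ k:ℝ))/(φ k:ℝ) := by
        field_simp
      rw [h2, div_mul_eq_mul_div, le_div_iff₀ hφk0]
      have h3 : ((φ (k+1):ℝ) - (φ k:ℝ)) * (c * ((φ k:ℝ))^(-a)) * (φ k:ℝ)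
          = ((φ (k+1):ℝ) - (φ k:ℝ)) * (c * ((φ k:ℝ))^(1-a)) := by
        have : ((φ k:ℝ))^(-a) * (φ k:ℝ) = ((φ k:ℝ))^(1-a) := by
          nth_rewrite 2 [← Real.rpow_one (φ k:ℝ)]
          rw [← Real.rpow_add hφk0]
          ring_nf
        calc ((φ (k+1):ℝ) - (φ k:ℝ)) * (c * ((φ k:ℝ))^(-a)) * (φ k:ℝ)
            = ((φ (k+1):ℝ) - (φ k:ℝ)) * (c * (((φ k:ℝ))^(-a) * (φ k:ℝ))) := by ring
        _ = ((φ (k+1):ℝ) - (φ k:ℝ)) * (c * ((φ k:ℝ))^(1-a)) := by rw [this]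
      rw [h3]
      have hnn : (0:ℝ) ≤ (φ (k+1):ℝ) - (φ k:ℝ) := by
        have : (φ k:ℝ) ≤ (φ (k+1):ℝ) := by exact_mod_cast h1
        linarith
      exact mul_le_mul_of_nonneg_left (hWlb _ (hφ1 k)) hnn
    calc W (φ (k+1)) = W (φ k) + ∑ n ∈ Finset.Ioc (φ k) (φ (k+1)), μval n := hsplit
    _ ≤ W (φ k) + ((φ (k+1):ℝ) - (φ k:ℝ)) * (c * ((φ k:ℝ))^(-a)) := by
        rw [← hcast]; linarith [hterm]
    _ ≤ W (φ k) + ((φ (k+1):ℝ)/(φ k:ℝ) - 1) * W (φ k) := by linarith [hkey]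
    _ = ((φ (k+1):ℝ)/(φ k:ℝ)) * W (φ k) := by ring
    _ = (((k:ℝ)+2)/((k:ℝ)+1))^m * W (φ k) := by rw [hRcast]
  have hρlb : ∀ k, 1 ≤ W (φ (k+1)) / W (φ k) := fun k =>
    (one_le_div (hWpos _ (hφ1 k))).mpr (hWmono (hφmono (Nat.lt_succ_self k)).le)
  have hulim : Tendsto (fun k : ℕ => (((k:ℝ)+2)/((k:ℝ)+1))^m) atTop (𝓝 1) := by
    have h1 : Tendsto (fun k : ℕ => ((k:ℝ)+2)/((k:ℝ)+1)) atTop (𝓝 1) := by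
      have heq : ∀ k:ℕ, ((k:ℝ)+2)/((k:ℝ)+1) = 1 + 1/((k:ℝ)+1) := by
        intro k
        have : ((k:ℝ)+1) ≠ 0 := by positivity
        field_simp
        ring
      simp_rw [heq]
      have h0 := tendsto_one_div_add_atTop_nhds_zero_nat (𝕜 := ℝ)
      have := (tendsto_const_nhds (x := (1:ℝ)) (f := atTop)).add h0
      simpa using this
    have := h1.pow m
    simpa using this
  have hρ : Tendsto (fun k => W (φ (k+1)) / W (φ k)) atTop (𝓝 1) :=
    tendsto_of_tendsto_of_tendsto_of_le_of_le tendsto_const_nhds hulim hρlb hρub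
  -- conclude
  filter_upwards [hae1, ae_all_iff.mpr hpos] with ω hω hωpos
  have hr : Tendsto (fun k => (∑ n ∈ Finset.Icc 1 (φ k), X n ω) / W (φ k)) atTop (𝓝 1) := by
    have heq : ∀ k, (∑ n ∈ Finset.Icc 1 (φ k), X n ω) / W (φ k) = Z k ω + 1 := by
      intro k
      rw [hZdef]
      have hWne : W (φ k) ≠ 0 := (hWpos _ (hφ1 k)).ne'
      field_simp
      ring
    simp_rw [heq]
    have := hω.add (tendsto_const_nhds (x := (1:ℝ)))
    simpa using this
  exact aux_squeeze (fun N => ∑ n ∈ Finset.Icc 1 N, X n ω) W φ hφmono hφ1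
    (fun N => Finset.sum_nonneg fun n _ => hωpos n)
    (fun N N' h => Finset.sum_le_sum_of_subset_of_nonneg (Finset.Icc_subset_Icc_right h)
      (fun n _ _ => hωpos n))
    hWmono hWpos hr hρ
end

section
/- Let $V$ be a real or complex inner product space, $N\in\mathbb{N}$, and $v_1,\dots,v_N\in V$. Then for every integer $M$ with $1\le M\le N$, $\big\|\sum_{n=1}^N v_n\big\|^2 \le 2M^{-1}N\sum_{n=1}^N\|v_n\|^2 + 4M^{-1}N\sum_{m=1}^M\Big|\sum_{n=1}^{N-m}\langle v_{n+m},v_n\rangle\Big|$, where the norm is induced by the inner product. -/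
open Finset

lemma shiftSum {E : Type*} [AddCommMonoid E] (f : ℕ → E) (a b m : ℕ) (hm : m ≤ a)
    (hf : ∀ n, n ∉ Finset.Icc a b → f n = 0) :
    ∑ j ∈ Finset.range (b + 1), f (j + m) = ∑ k ∈ Finset.Icc a b, f k := by
  have h1 : ∑ j ∈ Finset.range (b + 1), f (j + m)
      = ∑ k ∈ Finset.Ico m (b + 1 + m), f k := by
    rw [Finset.sum_Ico_eq_sum_range]
    have : b + 1 + m - m = b + 1 := by omega
    rw [this]
    exact Finset.sum_congr rfl fun j _ => by rw [add_comm]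
  rw [h1]
  refine (Finset.sum_subset ?_ ?_).symm
  · intro k hk
    simp only [Finset.mem_Icc] at hk
    exact Finset.mem_Ico.2 ⟨le_trans hm hk.1, by omega⟩
  · intro k _ hk
    exact hf k hk

lemma iccShiftSum {E : Type*} [AddCommMonoid E] (g : ℕ → E) (N M : ℕ) (hM1 : 1 ≤ M) :
    ∑ k ∈ Finset.Icc M (N + M - 1), g k = ∑ n ∈ Finset.Icc 1 N, g (n + (M - 1)) := by
  have h : Finset.Icc M (N + M - 1) = Finset.Icc (1 + (M - 1)) (N + (M - 1)) := by
    congr 1 <;> omega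
  rw [h, ← Finset.map_add_right_Icc, Finset.sum_map]
  rfl

/-- Finitary Van der Corput inequality in an inner product space. -/
theorem stmt2 {𝕜 V : Type*} [RCLike 𝕜] [NormedAddCommGroup V] [InnerProductSpace 𝕜 V]
    (N : ℕ) (v : ℕ → V) (M : ℕ) (hM1 : 1 ≤ M) (hMN : M ≤ N) :
    ‖∑ n ∈ Finset.Icc 1 N, v n‖ ^ 2 ≤
      2 * (M:ℝ)⁻¹ * N * ∑ n ∈ Finset.Icc 1 N, ‖v n‖ ^ 2 +
      4 * (M:ℝ)⁻¹ * N * ∑ m ∈ Finset.Icc 1 M,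
        ‖∑ n ∈ Finset.Icc 1 (N - m), (inner 𝕜 (v (n + m)) (v n) : 𝕜)‖ := by
  classical
  set u : ℕ → V := fun n => if n ∈ Finset.Icc M (N + M - 1) then v (n - M + 1) else 0 with hu
  have hu0 : ∀ n, n ∉ Finset.Icc M (N + M - 1) → u n = 0 := by
    intro n hn; simp only [hu]; rw [if_neg hn]
  have huv : ∀ n ∈ Finset.Icc 1 N, u (n + (M - 1)) = v n := by
    intro n hn
    simp only [Finset.mem_Icc] at hn
    have hmem : n + (M - 1) ∈ Finset.Icc M (N + M - 1) := by
      simp only [Finset.mem_Icc]; omega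
    have harg : n + (M - 1) - M + 1 = n := by omega
    simp only [hu]; rw [if_pos hmem, harg]
  have hb1 : N + M - 1 + 1 = N + M := by omega
  set S : V := ∑ n ∈ Finset.Icc 1 N, v n with hS
  set A : ℝ := ∑ n ∈ Finset.Icc 1 N, ‖v n‖ ^ 2 with hA
  set T : ℕ → 𝕜 := fun d => ∑ k ∈ Finset.Icc M (N + M - 1), (inner 𝕜 (u (k + d)) (u k) : 𝕜)
    with hT
  set Sig : ℝ := ∑ m ∈ Finset.Icc 1 M,
      ‖∑ n ∈ Finset.Icc 1 (N - m), (inner 𝕜 (v (n + m)) (v n) : 𝕜)‖ with hSig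
  set w : ℕ → V := fun j => ∑ m ∈ Finset.range M, u (j + m) with hw
  -- T d in terms of v
  have hTd : ∀ d, 1 ≤ d → d ≤ M →
      T d = ∑ n ∈ Finset.Icc 1 (N - d), (inner 𝕜 (v (n + d)) (v n) : 𝕜) := by
    intro d hd1 hdM
    show (∑ k ∈ Finset.Icc M (N + M - 1), (inner 𝕜 (u (k + d)) (u k) : 𝕜)) = _
    rw [iccShiftSum (fun k => (inner 𝕜 (u (k + d)) (u k) : 𝕜)) N M hM1]
    have h1 : ∀ n ∈ Finset.Icc 1 N,
        (inner 𝕜 (u (n + (M - 1) + d)) (u (n + (M - 1))) : 𝕜)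
          = (inner 𝕜 (u (n + (M - 1) + d)) (v n) : 𝕜) := by
      intro n hn; rw [huv n hn]
    rw [Finset.sum_congr rfl h1]
    refine (Finset.sum_subset ?_ ?_).symm.trans (Finset.sum_congr rfl ?_)
    · exact Finset.Icc_subset_Icc_right (by omega)
    · intro n hn hn'
      simp only [Finset.mem_Icc] at hn hn'
      have : u (n + (M - 1) + d) = 0 := by
        apply hu0
        simp only [Finset.mem_Icc]; omega
      rw [this, inner_zero_left]
    · intro n hn
      simp only [Finset.mem_Icc] at hn
      have hmem : n + (M - 1) + d ∈ Finset.Icc M (N + M - 1) := by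
        simp only [Finset.mem_Icc]; omega
      have harg : n + (M - 1) + d - M + 1 = n + d := by omega
      show (inner 𝕜 (u (n + (M - 1) + d)) (v n) : 𝕜) = _
      simp only [hu]; rw [if_pos hmem, harg]
  -- shifted inner-product sums
  have hG : ∀ m' m : ℕ, m' ≤ m → m < M →
      ∑ j ∈ Finset.range (N + M), (inner 𝕜 (u (j + m)) (u (j + m')) : 𝕜) = T (m - m') := by
    intro m' m hm'm hmM
    have h1 : ∀ j, (inner 𝕜 (u (j + m)) (u (j + m')) : 𝕜)
        = (fun k => (inner 𝕜 (u (k + (m - m'))) (u k) : 𝕜)) (j + m') := by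
      intro j
      have : j + m = j + m' + (m - m') := by omega
      rw [this]
    rw [Finset.sum_congr rfl fun j _ => h1 j, ← hb1]
    apply shiftSum (fun k => (inner 𝕜 (u (k + (m - m'))) (u k) : 𝕜)) M (N + M - 1) m'
      (by omega)
    intro n hn
    rw [hu0 n hn, inner_zero_right]
  -- diagonal value
  have hT0 : RCLike.re (T 0) = A := by
    have h0 : T 0 = ∑ k ∈ Finset.Icc M (N + M - 1), (inner 𝕜 (u k) (u k) : 𝕜) := by
      show (∑ k ∈ Finset.Icc M (N + M - 1), (inner 𝕜 (u (k + 0)) (u k) : 𝕜)) = _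
      simp
    rw [h0, map_sum, iccShiftSum (fun k => RCLike.re (inner 𝕜 (u k) (u k) : 𝕜)) N M hM1, hA]
    refine Finset.sum_congr rfl fun n hn => ?_
    rw [huv n hn, inner_self_eq_norm_sq]
  -- the double-sum entries
  set R : ℕ → ℕ → ℝ := fun m m' =>
    RCLike.re (∑ j ∈ Finset.range (N + M), (inner 𝕜 (u (j + m)) (u (j + m')) : 𝕜)) with hR
  have hRle : ∀ m' m, m' ≤ m → m < M → R m m' = RCLike.re (T (m - m')) := by
    intro m' m h1 h2
    simp only [hR]
    rw [hG m' m h1 h2]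
  have hRge : ∀ m m', m ≤ m' → m' < M → R m m' = RCLike.re (T (m' - m)) := by
    intro m m' h1 h2
    simp only [hR]
    have hc : ∀ j : ℕ, (inner 𝕜 (u (j + m)) (u (j + m')) : 𝕜)
        = starRingEnd 𝕜 (inner 𝕜 (u (j + m')) (u (j + m))) := fun j =>
      (inner_conj_symm _ _).symm
    rw [Finset.sum_congr rfl fun j _ => hc j, ← map_sum, hG m m' h1 h2, RCLike.conj_re]
  -- expansion of the sum of squared norms
  have hexp : ∑ j ∈ Finset.range (N + M), ‖w j‖ ^ 2
      = ∑ m ∈ Finset.range M, ∑ m' ∈ Finset.range M, R m m' := by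
    have h1 : ∀ j, ‖w j‖ ^ 2
        = ∑ m ∈ Finset.range M, ∑ m' ∈ Finset.range M,
            RCLike.re (inner 𝕜 (u (j + m)) (u (j + m')) : 𝕜) := by
      intro j
      rw [← inner_self_eq_norm_sq (𝕜 := 𝕜)]
      simp only [hw]
      rw [sum_inner, map_sum]
      refine Finset.sum_congr rfl fun m _ => ?_
      rw [inner_sum, map_sum]
    rw [Finset.sum_congr rfl fun j _ => h1 j, Finset.sum_comm]
    refine Finset.sum_congr rfl fun m _ => ?_
    rw [Finset.sum_comm]
    refine Finset.sum_congr rfl fun m' _ => ?_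
    simp only [hR, map_sum]
  -- Sig in terms of T
  have hSigT : Sig = ∑ d ∈ Finset.Icc 1 M, ‖T d‖ := by
    rw [hSig]
    refine Finset.sum_congr rfl fun d hd => ?_
    simp only [Finset.mem_Icc] at hd
    rw [hTd d hd.1 hd.2]
  have hSig0 : 0 ≤ Sig := by
    rw [hSigT]; exact Finset.sum_nonneg fun d _ => norm_nonneg _
  -- triangle bounds
  have tri1 : ∀ m, m < M → ∑ m' ∈ Finset.range m, RCLike.re (T (m - m')) ≤ Sig := by
    intro m hm
    calc ∑ m' ∈ Finset.range m, RCLike.re (T (m - m'))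
        ≤ ∑ m' ∈ Finset.range m, ‖T (m - m')‖ :=
          Finset.sum_le_sum fun m' _ => RCLike.re_le_norm _
      _ = ∑ d ∈ Finset.Icc 1 m, ‖T d‖ := by
          refine Finset.sum_nbij' (i := fun m' => m - m') (j := fun d => m - d)
            ?_ ?_ ?_ ?_ ?_
          · intro a ha; simp only [Finset.mem_range] at ha; simp only [Finset.mem_Icc]; omega
          · intro a ha; simp only [Finset.mem_Icc] at ha; simp only [Finset.mem_range]; omega
          · intro a ha; simp only [Finset.mem_range] at ha; omega
          · intro a ha; simp only [Finset.mem_Icc] at ha; omega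
          · intro a _; rfl
      _ ≤ ∑ d ∈ Finset.Icc 1 M, ‖T d‖ :=
          Finset.sum_le_sum_of_subset_of_nonneg
            (Finset.Icc_subset_Icc_right hm.le) (fun d _ _ => norm_nonneg _)
      _ = Sig := hSigT.symm
  have tri2 : ∀ m, m < M → ∑ m' ∈ Finset.Ico (m + 1) M, RCLike.re (T (m' - m)) ≤ Sig := by
    intro m hm
    calc ∑ m' ∈ Finset.Ico (m + 1) M, RCLike.re (T (m' - m))
        ≤ ∑ m' ∈ Finset.Ico (m + 1) M, ‖T (m' - m)‖ :=
          Finset.sum_le_sum fun m' _ => RCLike.re_le_norm _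
      _ = ∑ d ∈ Finset.Icc 1 (M - 1 - m), ‖T d‖ := by
          refine Finset.sum_nbij' (i := fun m' => m' - m) (j := fun d => d + m)
            ?_ ?_ ?_ ?_ ?_
          · intro a ha; simp only [Finset.mem_Ico] at ha; simp only [Finset.mem_Icc]; omega
          · intro a ha; simp only [Finset.mem_Icc] at ha; simp only [Finset.mem_Ico]; omega
          · intro a ha; simp only [Finset.mem_Ico] at ha; omega
          · intro a ha; simp only [Finset.mem_Icc] at ha; omega
          · intro a _; rfl
      _ ≤ ∑ d ∈ Finset.Icc 1 M, ‖T d‖ :=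
          Finset.sum_le_sum_of_subset_of_nonneg
            (Finset.Icc_subset_Icc_right (by omega)) (fun d _ _ => norm_nonneg _)
      _ = Sig := hSigT.symm
  -- per-row bound
  have hinner : ∀ m, m < M → ∑ m' ∈ Finset.range M, R m m' ≤ A + (Sig + Sig) := by
    intro m hm
    have hsplit : ∑ m' ∈ Finset.range M, R m m'
        = ((∑ m' ∈ Finset.range m, R m m') + R m m)
            + ∑ m' ∈ Finset.Ico (m + 1) M, R m m' := by
      rw [Finset.range_eq_Ico,
        ← Finset.sum_Ico_consecutive (fun m' => R m m') (Nat.zero_le (m + 1)) hm,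
        Finset.sum_Ico_succ_top (Nat.zero_le m), Finset.range_eq_Ico]
    rw [hsplit]
    have h1 : ∑ m' ∈ Finset.range m, R m m' ≤ Sig := by
      refine le_trans (le_of_eq (Finset.sum_congr rfl fun m' hm' =>
        hRle m' m (Finset.mem_range.1 hm').le hm)) (tri1 m hm)
    have h2 : R m m = A := by
      rw [hRle m m le_rfl hm, Nat.sub_self, hT0]
    have h3 : ∑ m' ∈ Finset.Ico (m + 1) M, R m m' ≤ Sig := by
      refine le_trans (le_of_eq (Finset.sum_congr rfl fun m' hm' => ?_)) (tri2 m hm)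
      have hm'' := Finset.mem_Ico.1 hm'
      exact hRge m m' (by omega) hm''.2
    linarith
  -- total bound on the sum of squared norms
  have htotal : ∑ j ∈ Finset.range (N + M), ‖w j‖ ^ 2 ≤ (M : ℝ) * (A + 2 * Sig) := by
    rw [hexp]
    calc ∑ m ∈ Finset.range M, ∑ m' ∈ Finset.range M, R m m'
        ≤ ∑ _m ∈ Finset.range M, (A + (Sig + Sig)) :=
          Finset.sum_le_sum fun m hm => hinner m (Finset.mem_range.1 hm)
      _ = (M : ℝ) * (A + 2 * Sig) := by
          rw [Finset.sum_const, Finset.card_range, nsmul_eq_mul]; ring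
  -- the sum of the w's is M • S
  have hMS : ∑ j ∈ Finset.range (N + M), w j = M • S := by
    simp only [hw]
    rw [Finset.sum_comm]
    have h1 : ∀ m ∈ Finset.range M, ∑ j ∈ Finset.range (N + M), u (j + m) = S := by
      intro m hm
      simp only [Finset.mem_range] at hm
      rw [← hb1, shiftSum u M (N + M - 1) m (by omega) hu0,
        iccShiftSum u N M hM1, hS]
      exact Finset.sum_congr rfl huv
    rw [Finset.sum_congr rfl h1, Finset.sum_const, Finset.card_range]
  -- Cauchy-Schwarz
  have hCS : ‖∑ j ∈ Finset.range (N + M), w j‖ ^ 2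
      ≤ ((N : ℝ) + M) * ∑ j ∈ Finset.range (N + M), ‖w j‖ ^ 2 := by
    calc ‖∑ j ∈ Finset.range (N + M), w j‖ ^ 2
        ≤ (∑ j ∈ Finset.range (N + M), ‖w j‖) ^ 2 := by
          have := norm_sum_le (Finset.range (N + M)) w
          exact pow_le_pow_left₀ (norm_nonneg _) this 2
      _ ≤ (Finset.range (N + M)).card * ∑ j ∈ Finset.range (N + M), ‖w j‖ ^ 2 :=
          sq_sum_le_card_mul_sum_sq
      _ = ((N : ℝ) + M) * ∑ j ∈ Finset.range (N + M), ‖w j‖ ^ 2 := by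
          rw [Finset.card_range]; push_cast; ring
  have hnorm : ‖(M : ℕ) • S‖ = (M : ℝ) * ‖S‖ := by
    rw [← Nat.cast_smul_eq_nsmul 𝕜, norm_smul, RCLike.norm_natCast]
  rw [hMS, hnorm, mul_pow] at hCS
  have key : (M : ℝ) ^ 2 * ‖S‖ ^ 2 ≤ ((N : ℝ) + M) * ((M : ℝ) * (A + 2 * Sig)) := by
    calc (M : ℝ) ^ 2 * ‖S‖ ^ 2 ≤ ((N : ℝ) + M) * ∑ j ∈ Finset.range (N + M), ‖w j‖ ^ 2 :=
          hCS
      _ ≤ ((N : ℝ) + M) * ((M : ℝ) * (A + 2 * Sig)) := by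
          refine mul_le_mul_of_nonneg_left htotal (by positivity)
  have hMpos : (0 : ℝ) < M := by exact_mod_cast hM1
  have hA0 : (0 : ℝ) ≤ A := by
    rw [hA]; exact Finset.sum_nonneg fun n _ => by positivity
  have hMN' : (M : ℝ) ≤ N := by exact_mod_cast hMN
  have h2 : (M : ℝ) * ‖S‖ ^ 2 ≤ 2 * N * A + 4 * N * Sig := by
    nlinarith [key, mul_nonneg (sub_nonneg.2 hMN') (mul_nonneg hMpos.le hA0),
      mul_nonneg (sub_nonneg.2 hMN') (mul_nonneg hMpos.le hSig0),
      mul_pos hMpos hMpos, sq_nonneg (‖S‖)]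
  calc ‖S‖ ^ 2 = (M : ℝ)⁻¹ * ((M : ℝ) * ‖S‖ ^ 2) := by field_simp
    _ ≤ (M : ℝ)⁻¹ * (2 * N * A + 4 * N * Sig) :=
        mul_le_mul_of_nonneg_left h2 (by positivity)
    _ = 2 * (M : ℝ)⁻¹ * N * A + 4 * (M : ℝ)⁻¹ * N * Sig := by ring
end

section
/- Let $(Y,\mathcal{Y},\nu,S)$ be a measure-preserving system and $(E_n)_{n\in\mathbb{N}}$ a sequence of measurable sets having decay of correlation against $L^1(\nu)$ with rate $\rho$. Then the sequence $E'_n := S^{-n}E_n$ satisfies property (P) with rate $C\rho$ for some constant $C>0$: for every finite increasing sequence $1\le n_1<\cdots<n_k$, $|\nu(E'_{n_1}\cap\cdots\cap E'_{n_k})-\nu(E'_{n_1})\nu(E'_{n_2}\cap\cdots\cap E'_{n_k})|\le C\rho(n_2-n_1)\nu(E'_{n_2}\cap\cdots\cap E'_{n_k})$. -/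
open MeasureTheory Filter Topology

/-- Property (P) with rate `ρ`. -/
def HasPropP {Ω : Type*} [MeasurableSpace Ω] (P : Measure Ω)
    (E : ℕ → Set Ω) (ρ : ℕ → ℝ) : Prop :=
  ∀ (k : ℕ) (n : Fin (k + 2) → ℕ), StrictMono n → 1 ≤ n 0 →
    |(P (⋂ i, E (n i))).toReal -
        (P (E (n 0))).toReal * (P (⋂ i : Fin (k + 1), E (n i.succ))).toReal| ≤
      ρ (n 1 - n 0) * (P (⋂ i : Fin (k + 1), E (n i.succ))).toReal

/-- The collection `(E_n)` has decay of correlation against `L¹(ν)` with rate `ρ`: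
there is `C > 0` with `|∫_{E_n} g ∘ S^m dν - ν(E_n) ∫ g dν| ≤ C ρ(m) ‖g‖_{L¹}`
for all `n, m` and all `g ∈ L¹(ν)` supported on `⋃ k, E k`. -/
def DecayAgainstL1 {Y : Type*} [MeasurableSpace Y] (ν : Measure Y) (S : Y → Y)
    (E : ℕ → Set Y) (ρ : ℕ → ℝ) : Prop :=
  ∃ C > 0, ∀ (n m : ℕ) (g : Y → ℝ), Integrable g ν →
    (∀ y, y ∉ ⋃ k, E k → g y = 0) →
    |(∫ y in E n, g (S^[m] y) ∂ν) - (ν (E n)).toReal * ∫ y, g y ∂ν| ≤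
      C * ρ m * ∫ y, |g y| ∂ν

theorem stmt5 {Y : Type*} [MeasurableSpace Y] (ν : Measure Y) [IsProbabilityMeasure ν]
    (S : Y → Y) (hS : MeasurePreserving S ν ν)
    (E : ℕ → Set Y) (hE : ∀ n, MeasurableSet (E n))
    (ρ : ℕ → ℝ) (hρ0 : ∀ n, 0 ≤ ρ n)
    (hdecay : DecayAgainstL1 ν S E ρ) :
    ∃ C > 0, HasPropP ν (fun n => S^[n] ⁻¹' E n) (fun m => C * ρ m) := by

  obtain ⟨C, hC, hdec⟩ := hdecay
  refine ⟨C, hC, ?_⟩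
  intro k n hmono h1
  have h01 : n 0 ≤ n 1 := hmono.monotone (Fin.zero_le 1)
  set m := n 1 - n 0 with hm
  have hmn : m + n 0 = n 1 := Nat.sub_add_cancel h01
  set A : Set Y := ⋂ i : Fin (k+1), S^[n i.succ - n 1] ⁻¹' E (n i.succ) with hA
  have hAmeas : MeasurableSet A :=
    MeasurableSet.iInter fun i => (hS.iterate _).measurable (hE _)
  have hAsub : A ⊆ E (n 1) := by
    intro y hy
    have h0 := Set.mem_iInter.mp hy 0
    simpa [Fin.succ_zero_eq_one] using h0
  set g : Y → ℝ := A.indicator (fun _ => (1:ℝ)) with hg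
  have hgint : Integrable g ν := (integrable_const 1).indicator hAmeas
  have hgsupp : ∀ y, y ∉ ⋃ j, E j → g y = 0 := by
    intro y hy
    apply Set.indicator_of_notMem
    intro hyA
    exact hy (Set.mem_iUnion.mpr ⟨n 1, hAsub hyA⟩)
  have key := hdec (n 0) m g hgint hgsupp
  have hInt1 : ∫ y, g y ∂ν = (ν A).toReal := by
    rw [hg]; exact MeasureTheory.integral_indicator_one hAmeas
  have hInt2 : ∫ y, |g y| ∂ν = (ν A).toReal := by
    have habs : ∀ y, |g y| = g y := fun y =>
      abs_of_nonneg (Set.indicator_nonneg (fun _ _ => zero_le_one) y)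
    simp only [habs]; exact hInt1
  have hcomp : ∀ y, g (S^[m] y) = (S^[m] ⁻¹' A).indicator (fun _ => (1:ℝ)) y := by
    intro y
    by_cases h : S^[m] y ∈ A <;>
      simp [hg, Set.indicator_apply, Set.mem_preimage, h]
  have hInt3 : (∫ y in E (n 0), g (S^[m] y) ∂ν)
      = (ν (E (n 0) ∩ S^[m] ⁻¹' A)).toReal := by
    simp only [hcomp]
    rw [MeasureTheory.setIntegral_indicator ((hS.iterate m).measurable hAmeas)]
    simp [Set.inter_comm]; rfl
  have hright : (⋂ i : Fin (k+1), S^[n i.succ] ⁻¹' E (n i.succ)) = S^[n 1] ⁻¹' A := by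
    rw [hA, Set.preimage_iInter]
    refine Set.iInter_congr fun i => ?_
    have hle : n 1 ≤ n i.succ := by
      refine hmono.monotone ?_
      rw [← Fin.succ_zero_eq_one]
      exact Fin.succ_le_succ_iff.mpr (Fin.zero_le i)
    ext y
    simp [Set.mem_preimage, ← Function.iterate_add_apply, Nat.sub_add_cancel hle]
  have hleft : (⋂ i : Fin (k+2), S^[n i] ⁻¹' E (n i))
      = S^[n 0] ⁻¹' (E (n 0) ∩ S^[m] ⁻¹' A) := by
    rw [Set.preimage_inter]
    have h2 : S^[n 0] ⁻¹' (S^[m] ⁻¹' A) = S^[n 1] ⁻¹' A := by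
      ext y
      simp [Set.mem_preimage, ← Function.iterate_add_apply, hmn]
    rw [h2, ← hright]
    ext y
    simp [Set.mem_iInter, Fin.forall_fin_succ]
  have hP : ∀ (j : ℕ) (B : Set Y), MeasurableSet B → ν (S^[j] ⁻¹' B) = ν B :=
    fun j B hB => (hS.iterate j).measure_preimage hB.nullMeasurableSet
  have e1 : ν (⋂ i : Fin (k+2), S^[n i] ⁻¹' E (n i)) = ν (E (n 0) ∩ S^[m] ⁻¹' A) := by
    rw [hleft]
    exact hP _ _ ((hE _).inter ((hS.iterate m).measurable hAmeas))
  have e2 : ν (S^[n 0] ⁻¹' E (n 0)) = ν (E (n 0)) := hP _ _ (hE _)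
  have e3 : ν (⋂ i : Fin (k+1), S^[n i.succ] ⁻¹' E (n i.succ)) = ν A := by
    rw [hright]; exact hP _ _ hAmeas
  rw [hInt3, hInt1, hInt2] at key
  simp only []
  rw [e1, e2, e3]
  exact key
end

section
/- Let $(E_n)_{n\in\mathbb{N}}$ be measurable sets in a probability space satisfying property (P) with a decreasing summable rate $\rho$, and suppose $\mathbb{P}(E_n)=cn^{-a}$ for some $a\in(0,1)$, $c>0$. Then there exist $C>0$ and $\varepsilon>0$ such that for all $N$, $\sum_{n=1}^N\sum_{m=n+1}^N \operatorname{Cov}(\mathbb{1}_{E_n},\mathbb{1}_{E_m}) \le C N^{2-2a-\varepsilon}$. -/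
open MeasureTheory Filter Topology

lemma aux_sum_rpow (a : ℝ) (ha0 : 0 < a) (ha1 : a < 1) (N : ℕ) (hN : 1 ≤ N) :
    ∑ m ∈ Finset.Icc 1 N, (m:ℝ) ^ (-a) ≤ (1 + 1/(1-a)) * (N:ℝ) ^ (1-a) := by
  have h1a : (0:ℝ) < 1 - a := by linarith
  have hanti : AntitoneOn (fun x : ℝ => x ^ (-a)) (Set.Icc (1:ℕ) (N:ℕ)) := by
    intro x hx y hy hxy
    exact Real.rpow_le_rpow_of_nonpos (lt_of_lt_of_le one_pos (by exact_mod_cast hx.1)) hxy (by linarith)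
  have hint := AntitoneOn.sum_le_integral_Ico (f := fun x : ℝ => x ^ (-a)) hN hanti
  have hIcc : ∑ m ∈ Finset.Icc 2 N, (m:ℝ) ^ (-a) = ∑ i ∈ Finset.Ico 1 N, ((i+1:ℕ):ℝ) ^ (-a) := by
    rw [show Finset.Icc 2 N = Finset.Ico 2 (N+1) by rw [Finset.Ico_add_one_right_eq_Icc],
      Finset.sum_Ico_eq_sum_range, Finset.sum_Ico_eq_sum_range]
    apply Finset.sum_congr (by congr 1)
    intro i _
    congr 2
    omega
  have hintval : ∫ x in (1:ℕ)..(N:ℕ), x ^ (-a) = ((N:ℝ)^(1-a) - 1) / (1-a) := by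
    rw [integral_rpow (Or.inl (by linarith))]
    rw [show ((1:ℕ):ℝ) = 1 by norm_num, Real.one_rpow, show -a+1 = 1-a by ring]
  have hsplit : Finset.Icc 1 N = insert 1 (Finset.Icc 2 N) := by
    ext x; simp [Finset.mem_Icc, Finset.mem_insert]; omega
  have hone : (1:ℝ) ≤ (N:ℝ) ^ (1-a) :=
    Real.one_le_rpow (by exact_mod_cast hN) (by linarith)
  rw [hsplit, Finset.sum_insert (by simp)]
  have hle : ∑ m ∈ Finset.Icc 2 N, (m:ℝ) ^ (-a) ≤ ((N:ℝ)^(1-a) - 1)/(1-a) := by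
    rw [hIcc, ← hintval]; exact hint
  have h2 : ((N:ℝ)^(1-a) - 1)/(1-a) ≤ (N:ℝ)^(1-a)/(1-a) := by
    gcongr
    linarith
  simp only [Nat.cast_one, Real.one_rpow]
  calc 1 + ∑ m ∈ Finset.Icc 2 N, (m:ℝ) ^ (-a) ≤ 1 + (N:ℝ)^(1-a)/(1-a) := by linarith
    _ ≤ (N:ℝ)^(1-a) + (N:ℝ)^(1-a)/(1-a) := by linarith
    _ = (1 + 1/(1-a)) * (N:ℝ)^(1-a) := by field_simp

lemma aux_pair {Ω : Type*} [MeasurableSpace Ω] (P : Measure Ω)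
    (E : ℕ → Set Ω) (ρ : ℕ → ℝ) (hP : HasPropP P E ρ) (n m : ℕ) (hn : 1 ≤ n) (hnm : n < m) :
    (P (E n ∩ E m)).toReal - (P (E n)).toReal * (P (E m)).toReal ≤ ρ (m - n) * (P (E m)).toReal := by
  have hsm : StrictMono (![n, m] : Fin 2 → ℕ) := by
    intro i j hij
    fin_cases i <;> fin_cases j <;> simp_all
  have h := hP 0 ![n, m] hsm (by simpa using hn)
  have h1 : (⋂ i, E ((![n, m] : Fin 2 → ℕ) i)) = E n ∩ E m := by
    ext x; simp [Set.mem_iInter, Fin.forall_fin_two]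
  have h2 : (⋂ i : Fin 1, E ((![n, m] : Fin 2 → ℕ) i.succ)) = E m := by
    ext x; simp [Set.mem_iInter, Fin.forall_fin_one]
  rw [h1, h2] at h
  simp only [Matrix.cons_val_zero, Matrix.cons_val_one, Matrix.head_cons] at h
  have := abs_le.mp h
  linarith [this.2]

theorem stmt6 {Ω : Type*} [MeasurableSpace Ω] (P : Measure Ω) [IsProbabilityMeasure P]
    (E : ℕ → Set Ω) (hE : ∀ n, MeasurableSet (E n))
    (ρ : ℕ → ℝ) (hρ0 : ∀ n, 0 ≤ ρ n) (hρdec : Antitone ρ) (hρsum : Summable ρ)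
    (hP : HasPropP P E ρ)
    (a c : ℝ) (ha : a ∈ Set.Ioo (0:ℝ) 1) (hc : 0 < c)
    (hmeasE : ∀ n : ℕ, 1 ≤ n → (P (E n)).toReal = c * (n:ℝ) ^ (-a)) :
    ∃ C > 0, ∃ ε > 0, ∀ N : ℕ,
      ∑ n ∈ Finset.Icc 1 N, ∑ m ∈ Finset.Icc (n+1) N,
        ((P (E n ∩ E m)).toReal - (P (E n)).toReal * (P (E m)).toReal) ≤
      C * (N:ℝ) ^ (2 - 2*a - ε) := by
  obtain ⟨ha0, ha1⟩ := ha
  have h1a : (0:ℝ) < 1 - a := by linarith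
  set S := ∑' n, ρ n with hS
  have hS0 : 0 ≤ S := tsum_nonneg hρ0
  set C : ℝ := c * S * (1 + 1/(1-a)) + 1 with hC
  have hCpos : 0 < C := by
    rw [hC]
    have : 0 ≤ c * S * (1 + 1/(1-a)) := by positivity
    linarith
  refine ⟨C, hCpos, 1 - a, h1a, fun N => ?_⟩
  have hexp : 2 - 2*a - (1-a) = 1 - a := by ring
  rw [hexp]
  rcases Nat.eq_zero_or_pos N with hN0 | hN
  · subst hN0
    simp [Real.zero_rpow (by linarith : (1:ℝ) - a ≠ 0)]
  -- per-n inner sum bound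
  have hinner : ∀ n ∈ Finset.Icc 1 N,
      ∑ m ∈ Finset.Icc (n+1) N,
        ((P (E n ∩ E m)).toReal - (P (E n)).toReal * (P (E m)).toReal)
      ≤ c * (n:ℝ)^(-a) * S := by
    intro n hn
    rw [Finset.mem_Icc] at hn
    calc ∑ m ∈ Finset.Icc (n+1) N,
          ((P (E n ∩ E m)).toReal - (P (E n)).toReal * (P (E m)).toReal)
        ≤ ∑ m ∈ Finset.Icc (n+1) N, ρ (m - n) * (c * (n:ℝ)^(-a)) := by
          apply Finset.sum_le_sum
          intro m hm
          rw [Finset.mem_Icc] at hm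
          have hnm : n < m := hm.1
          have h1 := aux_pair P E ρ hP n m hn.1 hnm
          have h2 : (P (E m)).toReal ≤ c * (n:ℝ)^(-a) := by
            rw [hmeasE m (by omega)]
            have : (m:ℝ)^(-a) ≤ (n:ℝ)^(-a) :=
              Real.rpow_le_rpow_of_nonpos (by exact_mod_cast hn.1) (by exact_mod_cast hnm.le) (by linarith)
            nlinarith
          calc (P (E n ∩ E m)).toReal - (P (E n)).toReal * (P (E m)).toReal
              ≤ ρ (m - n) * (P (E m)).toReal := h1
            _ ≤ ρ (m - n) * (c * (n:ℝ)^(-a)) := by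
                apply mul_le_mul_of_nonneg_left h2 (hρ0 _)
      _ = (∑ m ∈ Finset.Icc (n+1) N, ρ (m - n)) * (c * (n:ℝ)^(-a)) := by
          rw [Finset.sum_mul]
      _ ≤ S * (c * (n:ℝ)^(-a)) := by
          apply mul_le_mul_of_nonneg_right ?_ (by positivity)
          have hre : ∑ m ∈ Finset.Icc (n+1) N, ρ (m - n)
              = ∑ j ∈ Finset.range (N + 1 - (n+1)), ρ (j + 1) := by
            rw [show Finset.Icc (n+1) N = Finset.Ico (n+1) (N+1) by rw [Finset.Ico_add_one_right_eq_Icc],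
              Finset.sum_Ico_eq_sum_range]
            apply Finset.sum_congr rfl
            intro j _
            congr 1
            omega
          rw [hre]
          have h3 : ∑ j ∈ Finset.range (N + 1 - (n+1)), ρ (j + 1)
              ≤ ∑ j ∈ Finset.range (N + 1 - (n+1) + 1), ρ j := by
            rw [Finset.sum_range_succ']
            simpa using hρ0 0
          refine h3.trans ?_
          exact Summable.sum_le_tsum _ (fun i _ => hρ0 i) hρsum
      _ = c * (n:ℝ)^(-a) * S := by ring
  calc ∑ n ∈ Finset.Icc 1 N, ∑ m ∈ Finset.Icc (n+1) N,
        ((P (E n ∩ E m)).toReal - (P (E n)).toReal * (P (E m)).toReal)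
      ≤ ∑ n ∈ Finset.Icc 1 N, c * (n:ℝ)^(-a) * S := Finset.sum_le_sum hinner
    _ = c * S * ∑ n ∈ Finset.Icc 1 N, (n:ℝ)^(-a) := by
        rw [Finset.mul_sum]; apply Finset.sum_congr rfl; intro n _; ring
    _ ≤ c * S * ((1 + 1/(1-a)) * (N:ℝ)^(1-a)) := by
        apply mul_le_mul_of_nonneg_left (aux_sum_rpow a ha0 ha1 N hN) (by positivity)
    _ ≤ C * (N:ℝ)^(1-a) := by
        have hN1 : (0:ℝ) ≤ (N:ℝ)^(1-a) := by positivity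
        rw [hC]
        nlinarith
end

section
/- Let $(E_n)_{n\in\mathbb{N}}$ be measurable sets in a probability space satisfying property (P) with a decreasing summable rate $\rho$, with $\mathbb{P}(E_n)=cn^{-a}$ for some $a\in(0,1/2)$, $c>0$. Then for almost every $\omega\in\Omega$, the set $\{n\in\mathbb{N}:\omega\in E_n\}$ is infinite, and moreover $\lim_{N\to\infty}|\{1\le n\le N:\omega\in E_n\}|/\sum_{n=1}^N \mathbb{P}(E_n) = 1$. -/
open MeasureTheory Filter Topology

lemma corr_bound {Ω : Type*} [MeasurableSpace Ω] {P : Measure Ω} {E : ℕ → Set Ω} {ρ : ℕ → ℝ}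
    (hP : HasPropP P E ρ) {m n : ℕ} (h1 : 1 ≤ m) (hmn : m < n) :
    |(P (E m ∩ E n)).toReal - (P (E m)).toReal * (P (E n)).toReal| ≤ ρ (n - m) * (P (E n)).toReal := by
  have h := hP 0 ![m, n] ?_ ?_
  · have e1 : (⋂ i, E (![m, n] i)) = E m ∩ E n := by
      ext x; simp [Fin.forall_fin_two]
    have e2 : (⋂ i : Fin 1, E (![m, n] i.succ)) = E n := by
      ext x; simp [Fin.forall_fin_one]
    rw [e1, e2] at h
    simpa using h
  · intro i j hij
    fin_cases i <;> fin_cases j <;> simp_all <;> omega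
  · simpa using h1

lemma sum_rho_le {ρ : ℕ → ℝ} (hρ0 : ∀ n, 0 ≤ ρ n) (hρsum : Summable ρ)
    (s : Finset ℕ) (n : ℕ) :
    ∑ m ∈ s.filter (· < n), ρ (n - m) ≤ ∑' k, ρ k := by
  have hinj : Set.InjOn (fun m => n - m) (s.filter (· < n)) := by
    intro x hx y hy hxy
    simp only [Finset.coe_filter, Set.mem_setOf_eq] at hx hy
    simp only at hxy
    omega
  rw [← Finset.sum_image hinj]
  exact Summable.sum_le_tsum _ (fun i _ => hρ0 i) hρsum
lemma var_bound {Ω : Type*} [MeasurableSpace Ω] (P : Measure Ω) [IsProbabilityMeasure P]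
    (E : ℕ → Set Ω) (hE : ∀ n, MeasurableSet (E n))
    (ρ : ℕ → ℝ) (hρ0 : ∀ n, 0 ≤ ρ n) (hρsum : Summable ρ)
    (hP : HasPropP P E ρ) (N : ℕ) :
    ∫ ω, (∑ n ∈ Finset.Icc 1 N, (E n).indicator (fun _ => (1:ℝ)) ω
        - ∑ n ∈ Finset.Icc 1 N, (P (E n)).toReal) ^ 2 ∂P
      ≤ 2 * (1 + ∑' k, ρ k) * ∑ n ∈ Finset.Icc 1 N, (P (E n)).toReal := by
  set s := Finset.Icc 1 N with hs
  set μn : ℕ → ℝ := fun n => (P (E n)).toReal with hμn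
  set f : ℝ := ∑ n ∈ s, μn n with hf
  have hμ0 : ∀ n, 0 ≤ μn n := fun n => ENNReal.toReal_nonneg
  set C : ℝ := ∑' k, ρ k with hC
  have hC0 : 0 ≤ C := tsum_nonneg hρ0
  have hind : ∀ n, Integrable ((E n).indicator (fun _ => (1:ℝ))) P :=
    fun n => (integrable_const 1).indicator (hE n)
  have hind2 : ∀ m n, Integrable ((E m ∩ E n).indicator (fun _ => (1:ℝ))) P :=
    fun m n => (integrable_const 1).indicator ((hE m).inter (hE n))
  -- pointwise square identity
  have key : ∀ ω, (∑ n ∈ s, (E n).indicator (fun _ => (1:ℝ)) ω) ^ 2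
      = ∑ m ∈ s, ∑ n ∈ s, (E m ∩ E n).indicator (fun _ => (1:ℝ)) ω := by
    intro ω
    rw [sq, Finset.sum_mul_sum]
    refine Finset.sum_congr rfl fun m _ => Finset.sum_congr rfl fun n _ => ?_
    by_cases hm : ω ∈ E m <;> by_cases hn : ω ∈ E n <;>
      simp [Set.indicator_apply, hm, hn]
  -- integral computations
  have hintS : ∫ ω, (∑ n ∈ s, (E n).indicator (fun _ => (1:ℝ)) ω) ∂P = f := by
    rw [integral_finset_sum s (fun n _ => hind n)]
    refine Finset.sum_congr rfl fun n _ => ?_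
    rw [integral_indicator_const (1:ℝ) (hE n)]; simp [hμn, measureReal_def]
  have hintS2 : ∫ ω, (∑ n ∈ s, (E n).indicator (fun _ => (1:ℝ)) ω) ^ 2 ∂P
      = ∑ m ∈ s, ∑ n ∈ s, (P (E m ∩ E n)).toReal := by
    simp only [key]
    rw [integral_finset_sum s (fun m _ => integrable_finset_sum s (fun n _ => hind2 m n))]
    refine Finset.sum_congr rfl fun m _ => ?_
    rw [integral_finset_sum s (fun n _ => hind2 m n)]
    refine Finset.sum_congr rfl fun n _ => ?_
    rw [integral_indicator_const (1:ℝ) ((hE m).inter (hE n))]; simp [measureReal_def]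
  have hS2int : Integrable (fun ω => (∑ n ∈ s, (E n).indicator (fun _ => (1:ℝ)) ω) ^ 2) P := by
    have : Integrable (fun ω => ∑ m ∈ s, ∑ n ∈ s, (E m ∩ E n).indicator (fun _ => (1:ℝ)) ω) P :=
      integrable_finset_sum s (fun m _ => integrable_finset_sum s (fun n _ => hind2 m n))
    exact this.congr (Filter.Eventually.of_forall fun ω => (key ω).symm)
  have hSint : Integrable (fun ω => ∑ n ∈ s, (E n).indicator (fun _ => (1:ℝ)) ω) P :=
    integrable_finset_sum s (fun n _ => hind n)
  -- expand the square of the difference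
  have hexp : ∫ ω, (∑ n ∈ s, (E n).indicator (fun _ => (1:ℝ)) ω - f) ^ 2 ∂P
      = (∑ m ∈ s, ∑ n ∈ s, (P (E m ∩ E n)).toReal) - f ^ 2 := by
    have e : ∀ ω, (∑ n ∈ s, (E n).indicator (fun _ => (1:ℝ)) ω - f) ^ 2
        = (∑ n ∈ s, (E n).indicator (fun _ => (1:ℝ)) ω) ^ 2
          - (2 * f) * (∑ n ∈ s, (E n).indicator (fun _ => (1:ℝ)) ω) + f ^ 2 := by
      intro ω; ring
    simp only [e]
    have hint1 : Integrable (fun ω => (∑ n ∈ s, (E n).indicator (fun _ => (1:ℝ)) ω) ^ 2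
        - (2 * f) * (∑ n ∈ s, (E n).indicator (fun _ => (1:ℝ)) ω)) P :=
      hS2int.sub (hSint.const_mul (2 * f))
    rw [integral_add hint1 (integrable_const _),
        integral_sub hS2int (hSint.const_mul (2 * f)), integral_const_mul, hintS, hintS2,
        integral_const]
    simp; ring
  rw [hexp]
  -- bound the double sum
  have hf2 : f ^ 2 = ∑ m ∈ s, ∑ n ∈ s, μn m * μn n := by
    rw [sq, hf, Finset.sum_mul_sum]
  have hdiff : (∑ m ∈ s, ∑ n ∈ s, (P (E m ∩ E n)).toReal) - f ^ 2
      = ∑ m ∈ s, ∑ n ∈ s, ((P (E m ∩ E n)).toReal - μn m * μn n) := by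
    rw [hf2, ← Finset.sum_sub_distrib]
    exact Finset.sum_congr rfl fun m _ => (Finset.sum_sub_distrib ..).symm
  rw [hdiff]
  -- termwise bound
  set w : ℕ → ℕ → ℝ := fun m n =>
    (if m = n then μn n else 0) + (if m < n then ρ (n - m) else 0) * μn n with hw
  have hterm : ∀ m ∈ s, ∀ n ∈ s, (P (E m ∩ E n)).toReal - μn m * μn n ≤ w m n + w n m := by
    intro m hm n hn
    have h1m : 1 ≤ m := (Finset.mem_Icc.mp hm).1
    have h1n : 1 ≤ n := (Finset.mem_Icc.mp hn).1
    rcases lt_trichotomy m n with h | h | h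
    · have := (abs_le.mp (corr_bound hP h1m h)).2
      simp only [hw, if_pos h, if_neg h.ne, if_neg (not_lt.mpr h.le), if_neg (Ne.symm h.ne)]
      linarith
    · subst h
      rw [Set.inter_self]
      have hle : (P (E m)).toReal - μn m * μn m ≤ μn m := by
        have : (P (E m)).toReal = μn m := rfl
        nlinarith [sq_nonneg (μn m)]
      simp only [hw, if_pos rfl, if_neg (lt_irrefl m), zero_mul, add_zero, if_true,
        eq_self_iff_true]
      nlinarith [hμ0 m]
    · have := (abs_le.mp (corr_bound hP h1n h)).2
      rw [Set.inter_comm]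
      simp only [hw, if_neg h.ne', if_neg (not_lt.mpr h.le), if_pos h, if_neg (Ne.symm h.ne')]
      linarith
  have hsum1 : ∑ m ∈ s, ∑ n ∈ s, ((P (E m ∩ E n)).toReal - μn m * μn n)
      ≤ ∑ m ∈ s, ∑ n ∈ s, (w m n + w n m) :=
    Finset.sum_le_sum fun m hm => Finset.sum_le_sum fun n hn => hterm m hm n hn
  have hswap : (∑ m ∈ s, ∑ n ∈ s, w n m) = ∑ m ∈ s, ∑ n ∈ s, w m n := Finset.sum_comm
  have hsum2 : ∑ m ∈ s, ∑ n ∈ s, (w m n + w n m) = 2 * ∑ m ∈ s, ∑ n ∈ s, w m n := by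
    have hsplit : ∑ m ∈ s, ∑ n ∈ s, (w m n + w n m)
        = (∑ m ∈ s, ∑ n ∈ s, w m n) + ∑ m ∈ s, ∑ n ∈ s, w n m := by
      rw [← Finset.sum_add_distrib]
      exact Finset.sum_congr rfl fun m _ => Finset.sum_add_distrib
    rw [hsplit, hswap]; ring
  have hinner : ∀ n ∈ s, ∑ m ∈ s, w m n ≤ (1 + C) * μn n := by
    intro n hn
    simp only [hw, Finset.sum_add_distrib, ← Finset.sum_mul]
    have e1 : ∑ m ∈ s, (if m = n then μn n else 0) ≤ μn n := by
      rw [Finset.sum_ite_eq' s n (fun _ => μn n)]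
      split <;> simp [hμ0 n]
    have e2 : (∑ m ∈ s, if m < n then ρ (n - m) else 0) ≤ C := by
      rw [← Finset.sum_filter]
      exact sum_rho_le hρ0 hρsum s n
    have := mul_le_mul_of_nonneg_right e2 (hμ0 n)
    linarith
  calc ∑ m ∈ s, ∑ n ∈ s, ((P (E m ∩ E n)).toReal - μn m * μn n)
      ≤ 2 * ∑ m ∈ s, ∑ n ∈ s, w m n := by rw [← hsum2]; exact hsum1
    _ = 2 * ∑ n ∈ s, ∑ m ∈ s, w m n := by
        rw [show (∑ m ∈ s, ∑ n ∈ s, w m n) = ∑ n ∈ s, ∑ m ∈ s, w m n from Finset.sum_comm]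
    _ ≤ 2 * ∑ n ∈ s, (1 + C) * μn n := by
        have := Finset.sum_le_sum hinner
        linarith
    _ = 2 * (1 + C) * f := by rw [← Finset.mul_sum, hf]; ring

lemma nat_sqrt_tendsto : Tendsto Nat.sqrt atTop atTop := by
  refine tendsto_atTop_atTop.mpr fun b => ⟨b ^ 2, fun n hn => ?_⟩
  calc b = Nat.sqrt (b ^ 2) := (Nat.sqrt_eq' b).symm
    _ ≤ Nat.sqrt n := Nat.sqrt_le_sqrt hn

lemma squeeze_lemma (T fq : ℕ → ℝ) (hT : Monotone T) (hf : Monotone fq)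
    (hT0 : ∀ N, 0 ≤ T N) (hfpos : ∀ N, 1 ≤ N → 0 < fq N)
    (hq : Tendsto (fun k => T (k ^ 2) / fq (k ^ 2)) atTop (𝓝 1))
    (hR : Tendsto (fun k => fq ((k + 1) ^ 2) / fq (k ^ 2)) atTop (𝓝 1)) :
    Tendsto (fun N => T N / fq N) atTop (𝓝 1) := by
  set q : ℕ → ℝ := fun k => T (k ^ 2) / fq (k ^ 2) with hqdef
  set R : ℕ → ℝ := fun k => fq ((k + 1) ^ 2) / fq (k ^ 2) with hRdef
  have hl : Tendsto (fun k => q k / R k) atTop (𝓝 1) := by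
    have h := hq.div hR one_ne_zero
    rw [div_one] at h
    exact h
  have hu : Tendsto (fun k => q (k + 1) * R k) atTop (𝓝 1) := by
    simpa using (hq.comp (tendsto_add_atTop_nat 1)).mul hR
  have hcl : Tendsto (fun N => q (Nat.sqrt N) / R (Nat.sqrt N)) atTop (𝓝 1) :=
    hl.comp nat_sqrt_tendsto
  have hcu : Tendsto (fun N => q (Nat.sqrt N + 1) * R (Nat.sqrt N)) atTop (𝓝 1) :=
    hu.comp nat_sqrt_tendsto
  refine tendsto_of_tendsto_of_tendsto_of_le_of_le' hcl hcu ?_ ?_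
  · filter_upwards [eventually_ge_atTop 1] with N hN
    set k := Nat.sqrt N with hk
    have hk1 : 1 ≤ k := Nat.sqrt_pos.mpr hN |>.nat_succ_le
    have hk2 : k ^ 2 ≤ N := Nat.sqrt_le' N
    have hk3 : N ≤ (k + 1) ^ 2 := (Nat.lt_succ_sqrt' N).le
    have hk0 : 0 < k := Nat.sqrt_pos.mpr hN
    have hfk : 0 < fq (k ^ 2) := hfpos _ (Nat.one_le_pow _ _ hk0)
    have hfk1 : 0 < fq ((k + 1) ^ 2) := hfpos _ (Nat.one_le_pow _ _ (Nat.succ_pos k))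
    have hfN : 0 < fq N := lt_of_lt_of_le hfk (hf hk2)
    have e : q k / R k = T (k ^ 2) / fq ((k + 1) ^ 2) := by
      rw [hqdef, hRdef]
      field_simp
    rw [e]
    exact div_le_div₀ (hT0 N) (hT hk2) hfN (hf hk3)
  · filter_upwards [eventually_ge_atTop 1] with N hN
    set k := Nat.sqrt N with hk
    have hk2 : k ^ 2 ≤ N := Nat.sqrt_le' N
    have hk3 : N ≤ (k + 1) ^ 2 := (Nat.lt_succ_sqrt' N).le
    have hk0 : 0 < k := Nat.sqrt_pos.mpr hN
    have hfk : 0 < fq (k ^ 2) := hfpos _ (Nat.one_le_pow _ _ hk0)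
    have hfk1 : 0 < fq ((k + 1) ^ 2) := hfpos _ (Nat.one_le_pow _ _ (Nat.succ_pos k))
    have hfN : 0 < fq N := lt_of_lt_of_le hfk (hf hk2)
    have e : q (k + 1) * R k = T ((k + 1) ^ 2) / fq (k ^ 2) := by
      rw [hqdef, hRdef]
      field_simp
    rw [e]
    exact div_le_div₀ (hT0 _) (hT hk3) hfk (hf hk2)

lemma cheb {Ω : Type*} [MeasurableSpace Ω] (P : Measure Ω) [IsProbabilityMeasure P]
    (g : Ω → ℝ) (hg : Integrable (fun ω => (g ω) ^ 2) P) {ε B : ℝ} (hε : 0 < ε)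
    (hB : ∫ ω, (g ω) ^ 2 ∂P ≤ B) :
    P {ω | ε ≤ |g ω|} ≤ ENNReal.ofReal (B / ε ^ 2) := by
  have hsub : {ω | ε ≤ |g ω|} ⊆ {ω | ε ^ 2 ≤ (g ω) ^ 2} := by
    intro ω h
    simp only [Set.mem_setOf_eq] at h ⊢
    calc ε ^ 2 ≤ |g ω| ^ 2 := pow_le_pow_left₀ hε.le h 2
      _ = (g ω) ^ 2 := sq_abs _
  have hm := mul_meas_ge_le_integral_of_nonneg
    (Filter.Eventually.of_forall fun ω => sq_nonneg (g ω)) hg (ε ^ 2)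
  have h2 : (P {ω | ε ^ 2 ≤ (g ω) ^ 2}).toReal ≤ B / ε ^ 2 := by
    rw [le_div_iff₀ (pow_pos hε 2)]
    calc (P {ω | ε ^ 2 ≤ (g ω) ^ 2}).toReal * ε ^ 2
        = ε ^ 2 * (P {x | ε ^ 2 ≤ (g x) ^ 2}).toReal := by ring
      _ ≤ ∫ ω, (g ω) ^ 2 ∂P := hm
      _ ≤ B := hB
  calc P {ω | ε ≤ |g ω|} ≤ P {ω | ε ^ 2 ≤ (g ω) ^ 2} := measure_mono hsub
    _ ≤ ENNReal.ofReal (B / ε ^ 2) := by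
        rw [← ENNReal.ofReal_toReal (measure_ne_top P _)]
        exact ENNReal.ofReal_le_ofReal h2

section ffacts
variable {a c : ℝ} (ha : a ∈ Set.Ioo (0:ℝ) (1/2)) (hc : 0 < c)
  (μ : ℕ → ℝ) (hμ0 : ∀ n, 0 ≤ μ n) (hμ : ∀ n : ℕ, 1 ≤ n → μ n = c * (n:ℝ) ^ (-a))

include hμ0 in
lemma F_mono : Monotone (fun N => ∑ n ∈ Finset.Icc 1 N, μ n) := by
  intro N M hNM
  exact Finset.sum_le_sum_of_subset_of_nonneg
    (Finset.Icc_subset_Icc_right hNM) (fun i _ _ => hμ0 i)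

include ha hc hμ in
lemma F_lb : ∀ N : ℕ, 1 ≤ N → c * (N:ℝ) ^ (1 - a) ≤ ∑ n ∈ Finset.Icc 1 N, μ n := by
  intro N hN
  have hNpos : (0:ℝ) < N := by exact_mod_cast hN
  have hterm : ∀ n ∈ Finset.Icc 1 N, c * (N:ℝ) ^ (-a) ≤ μ n := by
    intro n hn
    obtain ⟨h1, h2⟩ := Finset.mem_Icc.mp hn
    rw [hμ n h1]
    have hn0 : (0:ℝ) < n := by exact_mod_cast h1
    exact mul_le_mul_of_nonneg_left
      (Real.rpow_le_rpow_of_nonpos hn0 (by exact_mod_cast h2) (neg_nonpos.mpr ha.1.le)) hc.le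
  calc c * (N:ℝ) ^ (1 - a) = N * (c * (N:ℝ) ^ (-a)) := by
        rw [show (1:ℝ) - a = 1 + (-a) by ring, Real.rpow_add hNpos, Real.rpow_one]
        ring
    _ = ∑ _n ∈ Finset.Icc 1 N, c * (N:ℝ) ^ (-a) := by
        rw [Finset.sum_const, Nat.card_Icc]
        simp
    _ ≤ ∑ n ∈ Finset.Icc 1 N, μ n := Finset.sum_le_sum hterm

include ha hc hμ hμ0 in
lemma F_pos : ∀ N : ℕ, 1 ≤ N → 0 < ∑ n ∈ Finset.Icc 1 N, μ n := by
  intro N hN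
  have := F_lb ha hc μ hμ N hN
  have h : (0:ℝ) < c * (N:ℝ) ^ (1 - a) := by
    have : (0:ℝ) < N := by exact_mod_cast hN
    positivity
  linarith

include ha hc hμ hμ0 in
lemma F_tendsto : Tendsto (fun N => ∑ n ∈ Finset.Icc 1 N, μ n) atTop atTop := by
  have h1 : Tendsto (fun N : ℕ => c * (N:ℝ) ^ (1 - a)) atTop atTop := by
    apply Tendsto.const_mul_atTop hc
    exact (tendsto_rpow_atTop (by linarith [ha.1, ha.2] : (0:ℝ) < 1 - a)).comp
      tendsto_natCast_atTop_atTop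
  apply tendsto_atTop_mono' _ _ h1
  filter_upwards [eventually_ge_atTop 1] with N hN
  exact F_lb ha hc μ hμ N hN

include ha hc hμ hμ0 in
lemma F_diff : ∀ k : ℕ, 1 ≤ k →
    (∑ n ∈ Finset.Icc 1 ((k+1)^2), μ n) - ∑ n ∈ Finset.Icc 1 (k^2), μ n
      ≤ 3 * c * (k:ℝ) ^ (1 - 2*a) := by
  intro k hk
  have hkpos : (0:ℝ) < k := by exact_mod_cast hk
  have hIoc : ∀ M : ℕ, Finset.Icc 1 M = Finset.Ioc 0 M := by
    intro M; ext x; simp [Nat.lt_iff_add_one_le]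
  have hsub : (∑ n ∈ Finset.Icc 1 ((k+1)^2), μ n) - ∑ n ∈ Finset.Icc 1 (k^2), μ n
      = ∑ n ∈ Finset.Ioc (k^2) ((k+1)^2), μ n := by
    rw [hIoc, hIoc]
    have hcons := Finset.sum_Ioc_consecutive μ (Nat.zero_le (k^2))
      (by nlinarith : k^2 ≤ (k+1)^2)
    linarith
  rw [hsub]
  have hterm : ∀ n ∈ Finset.Ioc (k^2) ((k+1)^2), μ n ≤ c * (k:ℝ) ^ (-(2*a)) := by
    intro n hn
    obtain ⟨h1, h2⟩ := Finset.mem_Ioc.mp hn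
    have h1' : 1 ≤ n := le_trans (Nat.one_le_pow _ _ hk) h1.le
    rw [hμ n h1']
    refine mul_le_mul_of_nonneg_left ?_ hc.le
    have heq : ((k:ℝ) ^ (2:ℕ)) ^ (-a) = (k:ℝ) ^ (-(2*a)) := by
      rw [← Real.rpow_natCast (k:ℝ) 2, ← Real.rpow_mul hkpos.le]
      congr 1
      push_cast
      ring
    rw [← heq]
    refine Real.rpow_le_rpow_of_nonpos (pow_pos hkpos 2) ?_ (neg_nonpos.mpr ha.1.le)
    exact_mod_cast h1.le
  calc ∑ n ∈ Finset.Ioc (k^2) ((k+1)^2), μ n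
      ≤ ∑ _n ∈ Finset.Ioc (k^2) ((k+1)^2), c * (k:ℝ) ^ (-(2*a)) := Finset.sum_le_sum hterm
    _ = ((k+1)^2 - k^2 : ℕ) * (c * (k:ℝ) ^ (-(2*a))) := by
        rw [Finset.sum_const, Nat.card_Ioc]; simp
    _ ≤ (3 * k : ℝ) * (c * (k:ℝ) ^ (-(2*a))) := by
        refine mul_le_mul_of_nonneg_right ?_ (by positivity)
        have h4 : (k+1)^2 = k^2 + (2*k+1) := by ring
        have h5 : ((k+1)^2 - k^2 : ℕ) = 2*k + 1 := by omega
        rw [h5]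
        have hk1 : (1:ℝ) ≤ (k:ℝ) := by exact_mod_cast hk
        push_cast
        nlinarith
    _ = 3 * c * (k:ℝ) ^ (1 - 2*a) := by
        rw [show (1:ℝ) - 2*a = 1 + (-(2*a)) by ring, Real.rpow_add hkpos, Real.rpow_one]
        ring
end ffacts

section fratio
variable {a c : ℝ} (ha : a ∈ Set.Ioo (0:ℝ) (1/2)) (hc : 0 < c)
  (μ : ℕ → ℝ) (hμ0 : ∀ n, 0 ≤ μ n) (hμ : ∀ n : ℕ, 1 ≤ n → μ n = c * (n:ℝ) ^ (-a))

include ha hc hμ0 hμ in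
lemma F_ratio : Tendsto (fun k : ℕ => (∑ n ∈ Finset.Icc 1 ((k+1)^2), μ n)
    / ∑ n ∈ Finset.Icc 1 (k^2), μ n) atTop (𝓝 1) := by
  have h1 : Tendsto (fun k : ℕ => 1 + 3 / (k:ℝ)) atTop (𝓝 1) := by
    have := tendsto_const_div_atTop_nhds_zero_nat (3:ℝ)
    simpa using tendsto_const_nhds.add this
  refine tendsto_of_tendsto_of_tendsto_of_le_of_le' tendsto_const_nhds h1 ?_ ?_
  · filter_upwards [eventually_ge_atTop 1] with k hk
    have hpos := F_pos ha hc μ hμ0 hμ (k^2) (Nat.one_le_pow _ _ hk)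
    rw [le_div_iff₀ hpos]
    exact (le_of_eq (one_mul _)).trans
      (F_mono μ hμ0 (by nlinarith : k^2 ≤ (k+1)^2))
  · filter_upwards [eventually_ge_atTop 1] with k hk
    have hkpos : (0:ℝ) < k := by exact_mod_cast hk
    have hpos := F_pos ha hc μ hμ0 hμ (k^2) (Nat.one_le_pow _ _ hk)
    have hlb := F_lb ha hc μ hμ (k^2) (Nat.one_le_pow _ _ hk)
    have hd := F_diff ha hc μ hμ0 hμ k hk
    have hlb' : c * (k:ℝ) ^ (2 - 2*a) ≤ ∑ n ∈ Finset.Icc 1 (k^2), μ n := by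
      have : ((k^2 : ℕ):ℝ) ^ (1 - a) = (k:ℝ) ^ (2 - 2*a) := by
        push_cast
        rw [← Real.rpow_natCast (k:ℝ) 2, ← Real.rpow_mul hkpos.le]
        congr 1; push_cast; ring
      rwa [this] at hlb
    have hdm : 0 ≤ (∑ n ∈ Finset.Icc 1 ((k+1)^2), μ n) - ∑ n ∈ Finset.Icc 1 (k^2), μ n := by
      have := F_mono μ hμ0 (by nlinarith : k^2 ≤ (k+1)^2)
      linarith
    have hdivle : ((∑ n ∈ Finset.Icc 1 ((k+1)^2), μ n) - ∑ n ∈ Finset.Icc 1 (k^2), μ n)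
        / (∑ n ∈ Finset.Icc 1 (k^2), μ n) ≤ 3 / (k:ℝ) := by
      have hden : (0:ℝ) < c * (k:ℝ) ^ (2 - 2*a) := by positivity
      have step : ((∑ n ∈ Finset.Icc 1 ((k+1)^2), μ n) - ∑ n ∈ Finset.Icc 1 (k^2), μ n)
          / (∑ n ∈ Finset.Icc 1 (k^2), μ n)
          ≤ (3 * c * (k:ℝ) ^ (1 - 2*a)) / (c * (k:ℝ) ^ (2 - 2*a)) :=
        div_le_div₀ (by positivity) hd hden hlb'
      refine step.trans (le_of_eq ?_)
      rw [show (2:ℝ) - 2*a = (1 - 2*a) + 1 by ring, Real.rpow_add hkpos, Real.rpow_one]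
      have hne : (k:ℝ) ^ (1 - 2*a) ≠ 0 := (Real.rpow_pos_of_pos hkpos _).ne'
      field_simp
    have heq : (∑ n ∈ Finset.Icc 1 ((k+1)^2), μ n) / (∑ n ∈ Finset.Icc 1 (k^2), μ n)
        = 1 + ((∑ n ∈ Finset.Icc 1 ((k+1)^2), μ n) - ∑ n ∈ Finset.Icc 1 (k^2), μ n)
          / (∑ n ∈ Finset.Icc 1 (k^2), μ n) := by
      field_simp
      ring
    rw [heq]
    linarith
end fratio

lemma sub_sq_integrable {Ω : Type*} [MeasurableSpace Ω] (P : Measure Ω) [IsProbabilityMeasure P]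
    (E : ℕ → Set Ω) (hE : ∀ n, MeasurableSet (E n)) (N : ℕ) (r : ℝ) :
    Integrable (fun ω => (∑ n ∈ Finset.Icc 1 N, (E n).indicator (fun _ => (1:ℝ)) ω - r) ^ 2) P := by
  have hind : ∀ n, Integrable ((E n).indicator (fun _ => (1:ℝ))) P :=
    fun n => (integrable_const 1).indicator (hE n)
  have hind2 : ∀ m n, Integrable ((E m ∩ E n).indicator (fun _ => (1:ℝ))) P :=
    fun m n => (integrable_const 1).indicator ((hE m).inter (hE n))
  have hSint : Integrable (fun ω => ∑ n ∈ Finset.Icc 1 N, (E n).indicator (fun _ => (1:ℝ)) ω) P :=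
    integrable_finset_sum _ (fun n _ => hind n)
  have key : ∀ ω, (∑ n ∈ Finset.Icc 1 N, (E n).indicator (fun _ => (1:ℝ)) ω) ^ 2
      = ∑ m ∈ Finset.Icc 1 N, ∑ n ∈ Finset.Icc 1 N,
          (E m ∩ E n).indicator (fun _ => (1:ℝ)) ω := by
    intro ω
    rw [sq, Finset.sum_mul_sum]
    refine Finset.sum_congr rfl fun m _ => Finset.sum_congr rfl fun n _ => ?_
    by_cases hm : ω ∈ E m <;> by_cases hn : ω ∈ E n <;>
      simp [Set.indicator_apply, hm, hn]
  have hS2int : Integrable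
      (fun ω => (∑ n ∈ Finset.Icc 1 N, (E n).indicator (fun _ => (1:ℝ)) ω) ^ 2) P := by
    have : Integrable (fun ω => ∑ m ∈ Finset.Icc 1 N, ∑ n ∈ Finset.Icc 1 N,
        (E m ∩ E n).indicator (fun _ => (1:ℝ)) ω) P :=
      integrable_finset_sum _ (fun m _ => integrable_finset_sum _ (fun n _ => hind2 m n))
    exact this.congr (Filter.Eventually.of_forall fun ω => (key ω).symm)
  exact ((hS2int.sub (hSint.const_mul (2 * r))).add (integrable_const (r ^ 2))).congr
    (Filter.Eventually.of_forall fun ω => by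
      simp only [Pi.add_apply, Pi.sub_apply]
      ring)

theorem stmt7 {Ω : Type*} [MeasurableSpace Ω] (P : Measure Ω) [IsProbabilityMeasure P]
    (E : ℕ → Set Ω) (hE : ∀ n, MeasurableSet (E n))
    (ρ : ℕ → ℝ) (hρ0 : ∀ n, 0 ≤ ρ n) (hρdec : Antitone ρ) (hρsum : Summable ρ)
    (hP : HasPropP P E ρ)
    (a c : ℝ) (ha : a ∈ Set.Ioo (0:ℝ) (1/2)) (hc : 0 < c)
    (hmeasE : ∀ n : ℕ, 1 ≤ n → (P (E n)).toReal = c * (n:ℝ) ^ (-a)) :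
    ∀ᵐ ω ∂P, {n : ℕ | 1 ≤ n ∧ ω ∈ E n}.Infinite ∧
      Tendsto (fun N : ℕ =>
          (∑ n ∈ Finset.Icc 1 N, (E n).indicator (fun _ => (1:ℝ)) ω) /
            ∑ n ∈ Finset.Icc 1 N, (P (E n)).toReal)
        atTop (𝓝 1) := by
  classical
  set μn : ℕ → ℝ := fun n => (P (E n)).toReal with hμn
  have hμ0 : ∀ n, 0 ≤ μn n := fun n => ENNReal.toReal_nonneg
  set F : ℕ → ℝ := fun N => ∑ n ∈ Finset.Icc 1 N, μn n with hF
  set K : ℝ := 2 * (1 + ∑' k, ρ k) with hK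
  have hC0 : (0:ℝ) ≤ ∑' k, ρ k := tsum_nonneg hρ0
  have hK0 : 0 ≤ K := by rw [hK]; linarith
  have hFmono : Monotone F := F_mono μn hμ0
  have hFpos : ∀ N : ℕ, 1 ≤ N → 0 < F N := F_pos ha hc μn hμ0 hmeasE
  have hFlb : ∀ N : ℕ, 1 ≤ N → c * (N:ℝ) ^ (1 - a) ≤ F N := F_lb ha hc μn hmeasE
  have hFratio : Tendsto (fun k : ℕ => F ((k+1)^2) / F (k^2)) atTop (𝓝 1) :=
    F_ratio ha hc μn hμ0 hmeasE
  have hFtop : Tendsto F atTop atTop := F_tendsto ha hc μn hμ0 hmeasE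
  -- the bad events
  set A : ℕ → ℕ → Set Ω := fun j k =>
    {ω | F ((k+1)^2) / ((j:ℝ)+1) ≤
      |(∑ n ∈ Finset.Icc 1 ((k+1)^2), (E n).indicator (fun _ => (1:ℝ)) ω) - F ((k+1)^2)|}
    with hA
  have hmeas : ∀ j k, P (A j k) ≤ ENNReal.ofReal (K * ((j:ℝ)+1)^2 / F ((k+1)^2)) := by
    intro j k
    have hFp : 0 < F ((k+1)^2) := hFpos _ (Nat.one_le_pow _ _ (Nat.succ_pos k))
    have hε : 0 < F ((k+1)^2) / ((j:ℝ)+1) := by positivity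
    have hB := var_bound P E hE ρ hρ0 hρsum hP ((k+1)^2)
    have hint := sub_sq_integrable P E hE ((k+1)^2) (F ((k+1)^2))
    have hcheb := cheb P
      (fun ω => (∑ n ∈ Finset.Icc 1 ((k+1)^2), (E n).indicator (fun _ => (1:ℝ)) ω)
        - F ((k+1)^2)) hint hε hB
    refine le_trans hcheb (le_of_eq ?_)
    congr 1
    field_simp
    ring
  have hsummable : ∀ j : ℕ, Summable (fun k : ℕ => K * ((j:ℝ)+1)^2 / F ((k+1)^2)) := by
    intro j
    have hp : (1:ℝ) < 2 - 2*a := by linarith [ha.2]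
    have hs0 : Summable (fun n : ℕ => 1 / (n:ℝ) ^ (2 - 2*a)) :=
      Real.summable_one_div_nat_rpow.mpr hp
    have hs1 : Summable (fun k : ℕ => 1 / ((k:ℝ)+1) ^ (2 - 2*a)) := by
      have := (summable_nat_add_iff 1).mpr hs0
      refine this.congr fun k => ?_
      push_cast
      norm_num
    have hs2 : Summable (fun k : ℕ => (K * ((j:ℝ)+1)^2 / c) * (1 / ((k:ℝ)+1) ^ (2 - 2*a))) :=
      hs1.mul_left _
    refine Summable.of_nonneg_of_le (fun k => ?_) (fun k => ?_) hs2
    · have hFp : 0 < F ((k+1)^2) := hFpos _ (Nat.one_le_pow _ _ (Nat.succ_pos k))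
      positivity
    · have hk1 : (0:ℝ) < (k:ℝ) + 1 := by positivity
      have hlb : c * ((k:ℝ)+1) ^ (2 - 2*a) ≤ F ((k+1)^2) := by
        have h := hFlb ((k+1)^2) (Nat.one_le_pow _ _ (Nat.succ_pos k))
        have : (((k+1)^2 : ℕ):ℝ) ^ (1 - a) = ((k:ℝ)+1) ^ (2 - 2*a) := by
          push_cast
          rw [← Real.rpow_natCast ((k:ℝ)+1) 2, ← Real.rpow_mul hk1.le]
          congr 1; push_cast; ring
        rwa [this] at h
      have hden : (0:ℝ) < c * ((k:ℝ)+1) ^ (2 - 2*a) := by positivity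
      calc K * ((j:ℝ)+1)^2 / F ((k+1)^2)
          ≤ K * ((j:ℝ)+1)^2 / (c * ((k:ℝ)+1) ^ (2 - 2*a)) := by
            apply div_le_div_of_nonneg_left _ hden hlb
            positivity
        _ = (K * ((j:ℝ)+1)^2 / c) * (1 / ((k:ℝ)+1) ^ (2 - 2*a)) := by
            field_simp
  have haej : ∀ j : ℕ, ∀ᵐ ω ∂P, ∀ᶠ k in atTop, ω ∉ A j k := by
    intro j
    apply ae_eventually_notMem
    have hb0 : ∀ k : ℕ, 0 ≤ K * ((j:ℝ)+1)^2 / F ((k+1)^2) := by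
      intro k
      have hFp : 0 < F ((k+1)^2) := hFpos _ (Nat.one_le_pow _ _ (Nat.succ_pos k))
      positivity
    have hlt : (∑' k, P (A j k)) < ⊤ :=
      calc (∑' k, P (A j k)) ≤ ∑' k, ENNReal.ofReal (K * ((j:ℝ)+1)^2 / F ((k+1)^2)) :=
            ENNReal.tsum_le_tsum (hmeas j)
        _ = ENNReal.ofReal (∑' k, K * ((j:ℝ)+1)^2 / F ((k+1)^2)) :=
            (ENNReal.ofReal_tsum_of_nonneg hb0 (hsummable j)).symm
        _ < ⊤ := ENNReal.ofReal_lt_top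
    exact hlt.ne
  filter_upwards [ae_all_iff.mpr haej] with ω hω
  -- convergence along squares
  have hqtend : Tendsto (fun k : ℕ =>
      (∑ n ∈ Finset.Icc 1 (k^2), (E n).indicator (fun _ => (1:ℝ)) ω) / F (k^2))
      atTop (𝓝 1) := by
    rw [Metric.tendsto_atTop]
    intro ε hε
    obtain ⟨j, hj⟩ := exists_nat_one_div_lt hε
    obtain ⟨K₀, hK₀⟩ := eventually_atTop.mp (hω j)
    refine ⟨K₀ + 1, fun m hm => ?_⟩
    have hm0 : 0 < m := by omega
    have hm1 : m - 1 + 1 = m := Nat.succ_pred_eq_of_pos hm0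
    have hk : K₀ ≤ m - 1 := by omega
    have hnot := hK₀ (m - 1) hk
    rw [hA] at hnot
    simp only [Set.mem_setOf_eq, not_le, hm1] at hnot
    have hFp : 0 < F (m^2) := hFpos _ (Nat.one_le_pow _ _ hm0)
    rw [Real.dist_eq]
    have heq : (∑ n ∈ Finset.Icc 1 (m^2), (E n).indicator (fun _ => (1:ℝ)) ω) / F (m^2) - 1
        = ((∑ n ∈ Finset.Icc 1 (m^2), (E n).indicator (fun _ => (1:ℝ)) ω) - F (m^2)) / F (m^2) := by
      field_simp
    rw [heq, abs_div, abs_of_pos hFp, div_lt_iff₀ hFp]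
    calc |(∑ n ∈ Finset.Icc 1 (m^2), (E n).indicator (fun _ => (1:ℝ)) ω) - F (m^2)|
        < F (m^2) / ((j:ℝ)+1) := hnot
      _ ≤ ε * F (m^2) := by
          have hjp : (0:ℝ) < (j:ℝ)+1 := by positivity
          have h2 : 1 < ε * ((j:ℝ)+1) := by
            rw [div_lt_iff₀ hjp] at hj
            linarith
          rw [div_le_iff₀ hjp]
          nlinarith [mul_lt_mul_of_pos_left h2 hFp]
  -- monotone interpolation
  have hT0 : ∀ N, 0 ≤ ∑ n ∈ Finset.Icc 1 N, (E n).indicator (fun _ => (1:ℝ)) ω :=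
    fun N => Finset.sum_nonneg fun n _ => Set.indicator_nonneg (fun _ _ => zero_le_one) ω
  have hTmono : Monotone (fun N => ∑ n ∈ Finset.Icc 1 N, (E n).indicator (fun _ => (1:ℝ)) ω) := by
    intro N M hNM
    exact Finset.sum_le_sum_of_subset_of_nonneg (Finset.Icc_subset_Icc_right hNM)
      (fun i _ _ => Set.indicator_nonneg (fun _ _ => zero_le_one) ω)
  have htend : Tendsto (fun N : ℕ =>
      (∑ n ∈ Finset.Icc 1 N, (E n).indicator (fun _ => (1:ℝ)) ω) / F N) atTop (𝓝 1) :=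
    squeeze_lemma _ F hTmono hFmono hT0 hFpos hqtend hFratio
  refine ⟨?_, htend⟩
  -- infinitude
  have hTtop : Tendsto (fun N => ∑ n ∈ Finset.Icc 1 N, (E n).indicator (fun _ => (1:ℝ)) ω)
      atTop atTop := by
    have hmul : Tendsto (fun N =>
        ((∑ n ∈ Finset.Icc 1 N, (E n).indicator (fun _ => (1:ℝ)) ω) / F N) * F N)
        atTop atTop := Filter.Tendsto.pos_mul_atTop one_pos htend hFtop
    refine hmul.congr' ?_
    filter_upwards [eventually_ge_atTop 1] with N hN
    exact div_mul_cancel₀ _ (hFpos N hN).ne'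
  by_contra hfin
  rw [Set.not_infinite] at hfin
  have hb : ∀ N, (∑ n ∈ Finset.Icc 1 N, (E n).indicator (fun _ => (1:ℝ)) ω)
      ≤ (hfin.toFinset.card : ℝ) := by
    intro N
    calc ∑ n ∈ Finset.Icc 1 N, (E n).indicator (fun _ => (1:ℝ)) ω
        ≤ ∑ n ∈ Finset.Icc 1 N, (if n ∈ hfin.toFinset then (1:ℝ) else 0) := by
          refine Finset.sum_le_sum fun n hn => ?_
          have h1n : 1 ≤ n := (Finset.mem_Icc.mp hn).1
          by_cases hω' : ω ∈ E n
          · have : n ∈ hfin.toFinset := hfin.mem_toFinset.mpr ⟨h1n, hω'⟩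
            simp [Set.indicator_apply, hω', this]
          · simp [Set.indicator_apply, hω']
      _ = (((Finset.Icc 1 N).filter (· ∈ hfin.toFinset)).card : ℝ) := by
          rw [Finset.sum_boole]
      _ ≤ (hfin.toFinset.card : ℝ) := by
          exact_mod_cast Finset.card_le_card (fun x hx => (Finset.mem_filter.mp hx).2)
  obtain ⟨N, hN⟩ := (hTtop.eventually_gt_atTop (hfin.toFinset.card : ℝ)).exists
  exact absurd (hb N) (not_le.mpr hN)
end

section
/- Let $\alpha\in(0,1)$ be a badly approximable irrational, $T_\alpha$ the rotation by $\alpha$ on $[0,1)$ with Lebesgue measure $\lambda$, and $E_n:=B(0,n^{-a}/2)\subseteq[0,1)$ (an arc of length $n^{-a}$ around $0$) for some fixed $a\in(0,1/2)$. For $y\in[0,1)$ such that the set $\Lambda_y=\{n: T_\alpha^n y\in E_n\}$ is infinite, let $(r_n(y))$ be its increasing enumeration. Then the sequence $(r_n(y))$ is NOT pointwise universally $L^2$-good and ergodic; specifically, taking $f=\mathbb{1}_{[0,1/4]}$ and $(X,\mu,T)=([0,1),\lambda,T_\alpha)$, for every $x\in[y+1/2,y+3/4] \pmod 1$ one has $f(T_\alpha^{r_n(y)}x)=0$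 for all sufficiently large $n$, so the averages converge to $0\ne \int f\,d\lambda=1/4$. -/
open Filter Topology

/-- `n` is a hitting time for the rotation by `α`: `T_α^n y` lies in the arc
`B(0, n^{-a}/2)` of the circle `[0,1)` around `0`. -/
def rotHit (α a y : ℝ) (n : ℕ) : Prop :=
  1 ≤ n ∧ (Int.fract (y + n * α) < (n:ℝ) ^ (-a) / 2 ∨
    1 - (n:ℝ) ^ (-a) / 2 < Int.fract (y + n * α))

/-- For a badly approximable rotation and shrinking arcs `E_n = B(0, n^{-a}/2)`, the
return-time sequence is not universally good and ergodic: for `f = 𝟙_{[0,1/4]}` and any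
`x ∈ [y + 1/2, y + 3/4] (mod 1)`, the values `f(T_α^{r_n(y)} x)` vanish for all large `n`,
so the ergodic averages converge to `0` rather than `∫ f dλ = 1/4`. -/
theorem stmt16 (α : ℝ) (hα : α ∈ Set.Ioo (0:ℝ) 1)
    (hbad : ∃ c > 0, ∀ p q : ℕ, 1 ≤ q → c / (q:ℝ) ^ 2 < |α - (p:ℝ) / (q:ℝ)|)
    (a : ℝ) (ha : a ∈ Set.Ioo (0:ℝ) (1/2))
    (y : ℝ) (hy : y ∈ Set.Ico (0:ℝ) 1)
    (hinf : {n : ℕ | rotHit α a y n}.Infinite)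
    (x : ℝ) (hx : Int.fract (x - y) ∈ Set.Icc (1/2 : ℝ) (3/4)) :
    (∀ᶠ n in atTop, (Set.Icc (0:ℝ) (1/4)).indicator (fun _ => (1:ℝ))
        (Int.fract (x + (Nat.nth (rotHit α a y) n : ℝ) * α)) = 0) ∧
      Tendsto (fun N : ℕ => (N:ℝ)⁻¹ * ∑ n ∈ Finset.range N,
          (Set.Icc (0:ℝ) (1/4)).indicator (fun _ => (1:ℝ))
            (Int.fract (x + (Nat.nth (rotHit α a y) n : ℝ) * α)))
        atTop (𝓝 0) ∧
      (0:ℝ) ≠ 1/4 := by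
  set r : ℕ → ℕ := Nat.nth (rotHit α a y) with hr
  set g : ℕ → ℝ := fun n => (Set.Icc (0:ℝ) (1/4)).indicator (fun _ => (1:ℝ))
      (Int.fract (x + (r n : ℝ) * α)) with hg
  have hmem : ∀ n, rotHit α a y (r n) := fun n => Nat.nth_mem_of_infinite hinf n
  have hrge : ∀ n, n ≤ r n := fun n => (Nat.nth_strictMono hinf).le_apply
  -- (m : ℝ) ^ (-a) → 0
  have htend : Tendsto (fun m : ℕ => (m:ℝ) ^ (-a)) atTop (𝓝 0) :=
    (tendsto_rpow_neg_atTop ha.1).comp tendsto_natCast_atTop_atTop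
  have hsmall : ∀ᶠ m : ℕ in atTop, (m:ℝ) ^ (-a) < 1/2 :=
    htend.eventually (gt_mem_nhds (by norm_num : (0:ℝ) < 1/2))
  obtain ⟨N0, hN0⟩ := eventually_atTop.1 hsmall
  -- key pointwise fact
  have key : ∀ m : ℕ, rotHit α a y m → (m:ℝ) ^ (-a) < 1/2 →
      (Set.Icc (0:ℝ) (1/4)).indicator (fun _ => (1:ℝ)) (Int.fract (x + (m:ℝ) * α)) = 0 := by
    intro m hm hsm
    have hfr : Int.fract (x + (m:ℝ) * α)
        = Int.fract (Int.fract (x - y) + Int.fract (y + (m:ℝ) * α)) := by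
      conv_lhs => rw [show x + (m:ℝ) * α
        = (Int.fract (x - y) + Int.fract (y + (m:ℝ) * α)) + ((⌊x - y⌋ + ⌊y + (m:ℝ) * α⌋ : ℤ) : ℝ) by
          simp only [Int.fract]; push_cast; ring]
      rw [Int.fract_add_intCast]
    set u := Int.fract (x - y) with hu
    set v := Int.fract (y + (m:ℝ) * α) with hv
    have hv0 : 0 ≤ v := Int.fract_nonneg _
    have hv1 : v < 1 := Int.fract_lt_one _
    have h14 : (1:ℝ)/4 < Int.fract (x + (m:ℝ) * α) := by
      rw [hfr]
      rcases hm.2 with h | h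
      · have he : Int.fract (u + v) = u + v :=
          Int.fract_eq_self.2 ⟨by linarith [hx.1], by linarith [hx.2]⟩
        rw [he]; linarith [hx.1]
      · have he : Int.fract (u + v) = u + v - 1 := by
          rw [← Int.fract_sub_intCast (u + v) (1:ℤ)]
          push_cast
          exact Int.fract_eq_self.2 ⟨by linarith [hx.1], by linarith [hx.2]⟩
        rw [he]; linarith [hx.1]
    exact Set.indicator_of_notMem (fun hmem => absurd hmem.2 (not_le.2 h14)) _
  have hev : ∀ᶠ n in atTop, g n = 0 := by
    filter_upwards [eventually_ge_atTop N0] with n hn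
    exact key (r n) (hmem n) (hN0 (r n) (le_trans hn (hrge n)))
  refine ⟨hev, ?_, by norm_num⟩
  obtain ⟨N1, hN1⟩ := eventually_atTop.1 hev
  have hconst : ∀ᶠ N : ℕ in atTop,
      (N:ℝ)⁻¹ * ∑ n ∈ Finset.range N, g n = (N:ℝ)⁻¹ * ∑ n ∈ Finset.range N1, g n := by
    filter_upwards [eventually_ge_atTop N1] with N hN
    congr 1
    exact (Finset.sum_subset (Finset.range_subset_range.2 hN)
      (fun i _ hi => hN1 i (le_of_not_gt (fun h => hi (Finset.mem_range.2 h))))).symm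
  have hlim : Tendsto (fun N : ℕ => (N:ℝ)⁻¹ * ∑ n ∈ Finset.range N1, g n) atTop (𝓝 0) := by
    have : Tendsto (fun N : ℕ => (N:ℝ)⁻¹) atTop (𝓝 0) :=
      tendsto_inv_atTop_zero.comp tendsto_natCast_atTop_atTop
    simpa using this.mul_const (∑ n ∈ Finset.range N1, g n)
  exact hlim.congr' (EventuallyEq.symm hconst)
end

section
/- Let $(\Omega,\mathcal{F},\mathbb{P})$ be a probability space and $(E_n)$ measurable sets satisfying property (P) with decreasing rate $\rho$ tending to $0$, with $\sigma_n:=\mathbb{P}(E_n)$ decreasing to $0$. Set $X_n=\mathbb{1}_{E_n}$, $Y_n=X_n-\sigma_n$. Then there is $C>0$ such that for all $n<m$: $\mathbb{E}(Y_n^2 Y_m^2)\le C\big((\rho(m-n)+\sigma_n)\sigma_m+\sigma_n^2\big)$. -/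
open MeasureTheory Filter Topology

/-- The centered indicator random variable `Y_n = 𝟙_{E_n} - P(E_n)`. -/
noncomputable def centeredInd {Ω : Type*} [MeasurableSpace Ω] (P : Measure Ω)
    (E : ℕ → Set Ω) (n : ℕ) (ω : Ω) : ℝ :=
  (E n).indicator (fun _ => (1:ℝ)) ω - (P (E n)).toReal


-- key pair lemma
lemma pairP {Ω : Type*} [MeasurableSpace Ω] (P : Measure Ω)
    (E : ℕ → Set Ω) (ρ : ℕ → ℝ) (hP : HasPropP P E ρ)
    {n m : ℕ} (hn : 1 ≤ n) (hnm : n < m) :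
    |(P (E n ∩ E m)).toReal - (P (E n)).toReal * (P (E m)).toReal| ≤
      ρ (m - n) * (P (E m)).toReal := by
  have hsm : StrictMono (![n, m] : Fin 2 → ℕ) := by
    intro i j hij
    fin_cases i <;> fin_cases j <;> simp_all <;> omega
  have h := hP 0 ![n, m] hsm (by simpa using hn)
  have e1 : (⋂ i, E (![n, m] i)) = E n ∩ E m := by
    ext x; simp [Fin.forall_fin_two]
  have e2 : (⋂ i : Fin 1, E (![n, m] i.succ)) = E m := by
    ext x; simp [Fin.forall_fin_one]
  rw [e1, e2] at h
  simpa using h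

lemma intBound {Ω : Type*} [MeasurableSpace Ω] (P : Measure Ω) [IsProbabilityMeasure P]
    (E : ℕ → Set Ω) (hE : ∀ n, MeasurableSet (E n)) (n m : ℕ) :
    (∫ ω, (centeredInd P E n ω) ^ 2 * (centeredInd P E m ω) ^ 2 ∂P) ≤
      (P (E n ∩ E m)).toReal + (P (E m)).toReal ^ 2 * (P (E n)).toReal +
        (P (E n)).toReal ^ 2 * (P (E m)).toReal +
        (P (E n)).toReal ^ 2 * (P (E m)).toReal ^ 2 := by
  set σn := (P (E n)).toReal with hσn
  set σm := (P (E m)).toReal with hσm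
  have hσn0 : 0 ≤ σn := ENNReal.toReal_nonneg
  have hσm0 : 0 ≤ σm := ENNReal.toReal_nonneg
  -- pointwise bound
  have key : ∀ (k : ℕ) (ω : Ω), (centeredInd P E k ω) ^ 2 ≤
      (E k).indicator (fun _ => (1:ℝ)) ω + (P (E k)).toReal ^ 2 := by
    intro k ω
    have h0 : (0:ℝ) ≤ (P (E k)).toReal := ENNReal.toReal_nonneg
    unfold centeredInd
    by_cases h : ω ∈ E k <;> simp [Set.indicator_apply, h] <;> nlinarith
  have hptw : ∀ ω, (centeredInd P E n ω) ^ 2 * (centeredInd P E m ω) ^ 2 ≤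
      ((E n).indicator (fun _ => (1:ℝ)) ω + σn ^ 2) *
      ((E m).indicator (fun _ => (1:ℝ)) ω + σm ^ 2) := by
    intro ω
    exact mul_le_mul (key n ω) (key m ω) (sq_nonneg _)
      (add_nonneg (Set.indicator_nonneg (fun _ _ => zero_le_one) ω) (sq_nonneg _))
  -- integrability
  have hindint : ∀ k : ℕ, Integrable ((E k).indicator (fun _ => (1:ℝ))) P := by
    intro k
    exact (integrable_const (1:ℝ)).indicator (hE k)
  have hgmeas : ∀ k : ℕ, Measurable ((E k).indicator (fun _ => (1:ℝ))) :=
    fun k => (measurable_const.indicator (hE k))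
  have hprod : (fun ω => ((E n).indicator (fun _ => (1:ℝ)) ω + σn ^ 2) *
      ((E m).indicator (fun _ => (1:ℝ)) ω + σm ^ 2)) =
      fun ω => (E n ∩ E m).indicator (fun _ => (1:ℝ)) ω
        + σm ^ 2 * (E n).indicator (fun _ => (1:ℝ)) ω
        + σn ^ 2 * (E m).indicator (fun _ => (1:ℝ)) ω + σn ^ 2 * σm ^ 2 := by
    funext ω
    by_cases h1 : ω ∈ E n <;> by_cases h2 : ω ∈ E m <;>
      simp [Set.indicator_apply, h1, h2] <;> ring
  have hgint : Integrable (fun ω => ((E n).indicator (fun _ => (1:ℝ)) ω + σn ^ 2) *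
      ((E m).indicator (fun _ => (1:ℝ)) ω + σm ^ 2)) P := by
    rw [hprod]
    exact ((((integrable_const (1:ℝ)).indicator ((hE n).inter (hE m))).add
      ((hindint n).const_mul _)).add ((hindint m).const_mul _)).add (integrable_const _)
  have hfint : Integrable (fun ω => (centeredInd P E n ω) ^ 2 * (centeredInd P E m ω) ^ 2) P := by
    have hmeas : Measurable (fun ω => (centeredInd P E n ω) ^ 2 * (centeredInd P E m ω) ^ 2) := by
      unfold centeredInd
      exact (((hgmeas n).sub measurable_const).pow_const 2).mul
        (((hgmeas m).sub measurable_const).pow_const 2)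
    refine hgint.mono' hmeas.aestronglyMeasurable (ae_of_all _ fun ω => ?_)
    rw [Real.norm_eq_abs, abs_of_nonneg (mul_nonneg (sq_nonneg _) (sq_nonneg _))]
    exact hptw ω
  have hA : Integrable (fun ω => (E n ∩ E m).indicator (fun _ => (1:ℝ)) ω) P :=
    (integrable_const 1).indicator ((hE n).inter (hE m))
  have hB : Integrable (fun ω => σm ^ 2 * (E n).indicator (fun _ => (1:ℝ)) ω) P :=
    (hindint n).const_mul _
  have hC : Integrable (fun ω => σn ^ 2 * (E m).indicator (fun _ => (1:ℝ)) ω) P :=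
    (hindint m).const_mul _
  have hAB : Integrable (fun ω => (E n ∩ E m).indicator (fun _ => (1:ℝ)) ω
      + σm ^ 2 * (E n).indicator (fun _ => (1:ℝ)) ω) P := hA.add hB
  have hABC : Integrable (fun ω => (E n ∩ E m).indicator (fun _ => (1:ℝ)) ω
      + σm ^ 2 * (E n).indicator (fun _ => (1:ℝ)) ω
      + σn ^ 2 * (E m).indicator (fun _ => (1:ℝ)) ω) P := hAB.add hC
  calc (∫ ω, (centeredInd P E n ω) ^ 2 * (centeredInd P E m ω) ^ 2 ∂P)
      ≤ ∫ ω, ((E n).indicator (fun _ => (1:ℝ)) ω + σn ^ 2) *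
          ((E m).indicator (fun _ => (1:ℝ)) ω + σm ^ 2) ∂P :=
        integral_mono hfint hgint hptw
    _ = (P (E n ∩ E m)).toReal + σm ^ 2 * σn + σn ^ 2 * σm + σn ^ 2 * σm ^ 2 := by
        rw [hprod, integral_add hABC (integrable_const _), integral_add hAB hC,
          integral_add hA hB, integral_const_mul, integral_const_mul,
          integral_indicator_const _ ((hE n).inter (hE m)),
          integral_indicator_const _ (hE n), integral_indicator_const _ (hE m)]
        simp [hσn, hσm, measureReal_def]
    _ = _ := by ring

theorem stmt17 {Ω : Type*} [MeasurableSpace Ω] (P : Measure Ω) [IsProbabilityMeasure P]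
    (E : ℕ → Set Ω) (hE : ∀ n, MeasurableSet (E n))
    (ρ : ℕ → ℝ) (hρ0 : ∀ n, 0 ≤ ρ n) (hρdec : Antitone ρ)
    (hρlim : Tendsto ρ atTop (𝓝 0))
    (hσdec : Antitone fun n => (P (E n)).toReal)
    (hσlim : Tendsto (fun n => (P (E n)).toReal) atTop (𝓝 0))
    (hP : HasPropP P E ρ) :
    ∃ C > 0, ∀ n m : ℕ, n < m →
      (∫ ω, (centeredInd P E n ω) ^ 2 * (centeredInd P E m ω) ^ 2 ∂P) ≤
        C * ((ρ (m - n) + (P (E n)).toReal) * (P (E m)).toReal +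
          (P (E n)).toReal ^ 2) := by
  rcases eq_or_lt_of_le (ENNReal.toReal_nonneg (a := P (E 0))) with h0 | h0
  · -- degenerate case: all probabilities are 0
    refine ⟨1, one_pos, fun n m hnm => ?_⟩
    have hz : ∀ k, (P (E k)).toReal = 0 := fun k =>
      le_antisymm (h0 ▸ hσdec (Nat.zero_le k)) ENNReal.toReal_nonneg
    have h1 := intBound P E hE n m
    have h2 : (P (E n ∩ E m)).toReal ≤ (P (E n)).toReal :=
      ENNReal.toReal_mono (measure_ne_top P _) (measure_mono Set.inter_subset_left)
    rw [hz n, hz m] at *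
    nlinarith [h1, h2]
  · set σ0 := (P (E 0)).toReal with hσ0def
    refine ⟨2 + 1 / σ0, by positivity, fun n m hnm => ?_⟩
    have h1 := intBound P E hE n m
    have hσn0 : (0:ℝ) ≤ (P (E n)).toReal := ENNReal.toReal_nonneg
    have hσm0 : (0:ℝ) ≤ (P (E m)).toReal := ENNReal.toReal_nonneg
    have hσmn : (P (E m)).toReal ≤ (P (E n)).toReal := hσdec hnm.le
    have hσn1 : (P (E n)).toReal ≤ 1 := by
      have := prob_le_one (μ := P) (s := E n)
      simpa using ENNReal.toReal_mono (by simp) this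
    have hσm1 : (P (E m)).toReal ≤ 1 := le_trans hσmn hσn1
    have hρ := hρ0 (m - n)
    rcases Nat.eq_zero_or_pos n with rfl | hn
    · have hPnm : (P (E 0 ∩ E m)).toReal ≤ (P (E m)).toReal :=
        ENNReal.toReal_mono (measure_ne_top P _) (measure_mono Set.inter_subset_right)
      have hinv : σ0 * (1 / σ0) = 1 := mul_one_div_cancel h0.ne'
      set σm := (P (E m)).toReal
      simp only [← hσ0def] at h1 hσn0 hσn1 hσmn
      have ha : σm ^ 2 * σ0 ≤ σ0 * σm := by nlinarith
      have hb : σ0 ^ 2 * σm ≤ σ0 * σm := by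
        nlinarith [mul_le_mul_of_nonneg_right hσn1 (mul_nonneg hσn0 hσm0)]
      have hc : σ0 ^ 2 * σm ^ 2 ≤ σ0 * σm := by
        nlinarith [mul_le_mul_of_nonneg_right hσm1 (mul_nonneg (mul_nonneg hσn0 hσn0) hσm0)]
      have he : σ0 * σm ≤ σ0 ^ 2 := by
        nlinarith [mul_le_mul_of_nonneg_left hσmn hσn0]
      have hm2 : (1 / σ0) * (σ0 * σm) = σm := by
        field_simp
      have hρ1 : 0 ≤ (1 / σ0) * (ρ (m - 0) * σm) := by positivity
      have hρ2 : 0 ≤ ρ (m - 0) * σm := mul_nonneg hρ hσm0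
      have hs2 : σ0 ^ 2 ≤ (1 / σ0) * σ0 ^ 2 + σ0 ^ 2 := by nlinarith
      nlinarith [h1, hPnm]
    · have hpair := pairP P E ρ hP hn hnm
      have hPnm : (P (E n ∩ E m)).toReal ≤
          (P (E n)).toReal * (P (E m)).toReal + ρ (m - n) * (P (E m)).toReal := by
        have := (abs_le.mp hpair).2
        linarith
      have hinvpos : (0:ℝ) ≤ 1 / σ0 := by positivity
      nlinarith [h1, hPnm, mul_nonneg hρ hσm0, mul_nonneg hσn0 hσm0,
        mul_nonneg hσn0 hσn0, mul_nonneg hinvpos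
          (add_nonneg (mul_nonneg (add_nonneg hρ hσn0) hσm0) (sq_nonneg (P (E n)).toReal)),
        mul_le_mul_of_nonneg_right hσm1 (mul_nonneg hσn0 hσm0),
        mul_le_mul_of_nonneg_left hσmn (mul_nonneg hσn0 hσm0),
        mul_le_mul_of_nonneg_right hσm1 (mul_nonneg hσn0 hσn0)]
end
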